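/- arXiv:1312.7324 — 14 statements merged into one kernel-verified Lean document; each statement's English description precedes it below -/
import Mathlib

section
/- Let X be a compact metric space and f : X → X continuous. Then x ∉ CR(f) if and only if there exists an open set U ⊆ X with x ∉ U, f(x) ∈ U, and f(closure U) ⊆ U. -/
open Metric Set

variable {X : Type*} [MetricSpace X]

/-- The set of chain recurrent points of `f`. -/
def ChainRec (f : X → X) : Set X :=
  {x | ∀ ε > (0:ℝ), ∃ n : ℕ, 0 < n ∧ ∃ c : ℕ → X, c 0 = x ∧ c n = x ∧
    ∀ i < n, dist (f (c i)) (c (i+1)) < ε}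

/-- The chain recurrent set of `f` restricted to a subset `A` (chains lie in `A`),
    i.e. the chain recurrent set of `f` as a self-map of the subspace `A`. -/
def ChainRecIn (f : X → X) (A : Set X) : Set X :=
  {x | x ∈ A ∧ ∀ ε > (0:ℝ), ∃ n : ℕ, 0 < n ∧ ∃ c : ℕ → X, (∀ i ≤ n, c i ∈ A) ∧
    c 0 = x ∧ c n = x ∧ ∀ i < n, dist (f (c i)) (c (i+1)) < ε}

theorem stmt0 [CompactSpace X] (f : X → X) (hf : Continuous f) (x : X) :
    x ∉ ChainRec f ↔
      ∃ U : Set X, IsOpen U ∧ x ∉ U ∧ f x ∈ U ∧ f '' closure U ⊆ U := by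
  constructor
  · intro hx
    -- get ε witnessing non-chain-recurrence
    simp only [ChainRec, mem_setOf_eq, not_forall] at hx
    obtain ⟨ε, hε, hno⟩ := hx
    push_neg at hno
    -- U : points reachable from x by an ε-chain
    set U : Set X := {y | ∃ n : ℕ, 0 < n ∧ ∃ c : ℕ → X, c 0 = x ∧ c n = y ∧
      ∀ i < n, dist (f (c i)) (c (i+1)) < ε} with hU
    refine ⟨U, ?_, ?_, ?_, ?_⟩
    · -- U is open
      rw [Metric.isOpen_iff]
      rintro y ⟨n, hn, c, hc0, hcn, hc⟩
      have hd : dist (f (c (n-1))) y < ε := by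
        have := hc (n-1) (Nat.sub_lt hn one_pos)
        have he : n - 1 + 1 = n := by omega
        rwa [he, hcn] at this
      refine ⟨ε - dist (f (c (n-1))) y, by linarith, ?_⟩
      intro y' hy'
      rw [mem_ball] at hy'
      refine ⟨n, hn, fun i => if i = n then y' else c i, ?_, ?_, ?_⟩
      · beta_reduce; rw [if_neg (show (0:ℕ) ≠ n by omega)]; exact hc0
      · simp
      · intro i hi
        by_cases h : i + 1 = n
        · have hi1 : i ≠ n := by omega
          have h1 : i = n - 1 := by omega
          beta_reduce
          rw [if_neg hi1, if_pos h]
          have := dist_triangle (f (c i)) y y'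
          rw [h1]
          rw [h1] at this
          have hyy : dist y y' = dist y' y := dist_comm _ _
          linarith
        · have hi1 : i ≠ n := by omega
          simp only [if_neg hi1, if_neg h]
          exact hc i hi
    · -- x ∉ U
      rintro ⟨n, hn, c, hc0, hcn, hc⟩
      obtain ⟨i, hi, hge⟩ := hno n hn c hc0 hcn
      exact absurd (hc i hi) (not_lt.mpr hge)
    · -- f x ∈ U
      refine ⟨1, one_pos, fun i => if i = 0 then x else f x, by simp, by simp, ?_⟩
      intro i hi
      interval_cases i
      simpa using hε
    · -- f '' closure U ⊆ U
      rintro _ ⟨z, hz, rfl⟩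
      have hcont : ∀ᶠ y in nhds z, dist (f y) (f z) < ε :=
        (Metric.tendsto_nhds.mp (hf.tendsto z)) ε hε
      rw [Metric.eventually_nhds_iff] at hcont
      obtain ⟨δ, hδ, hδ'⟩ := hcont
      obtain ⟨y, hyU, hyz⟩ := Metric.mem_closure_iff.mp hz δ hδ
      obtain ⟨n, hn, c, hc0, hcn, hc⟩ := hyU
      refine ⟨n + 1, Nat.succ_pos n, fun i => if i ≤ n then c i else f z, ?_, ?_, ?_⟩
      · simp [hc0]
      · simp
      · intro i hi
        by_cases h : i < n
        · have h1 : i ≤ n := le_of_lt h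
          have h2 : i + 1 ≤ n := h
          simp only [if_pos h1, if_pos h2]
          exact hc i h
        · have h1 : i = n := by omega
          subst h1
          beta_reduce
          rw [if_pos le_rfl, if_neg (show ¬ (i + 1 ≤ i) by omega), hcn]
          exact hδ' (by rwa [dist_comm] at hyz)
  · rintro ⟨U, hUo, hxU, hfxU, hfU⟩
    intro hx
    -- compact set K inside U
    set K : Set X := insert (f x) (f '' closure U) with hK
    have hKc : IsCompact K := (isClosed_closure.isCompact.image hf).insert (f x)
    have hKU : K ⊆ U := insert_subset hfxU hfU
    obtain ⟨δ, hδ, hδU⟩ := hKc.exists_thickening_subset_open hUo hKU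
    obtain ⟨n, hn, c, hc0, hcn, hc⟩ := hx δ hδ
    have key : ∀ i, 0 < i → i ≤ n → c i ∈ U := by
      intro i
      induction i with
      | zero => intro h; exact absurd h (lt_irrefl 0)
      | succ j ih =>
        intro _ hjn
        have hd : dist (f (c j)) (c (j+1)) < δ := hc j (by omega)
        have hfcj : f (c j) ∈ K := by
          rcases Nat.eq_zero_or_pos j with h0 | hj
          · rw [h0, hc0]; exact mem_insert _ _
          · exact mem_insert_of_mem _ ⟨c j, subset_closure (ih hj (by omega)), rfl⟩
        exact hδU (Metric.mem_thickening_iff.mpr ⟨f (c j), hfcj, by rwa [dist_comm]⟩)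
    exact hxU (hcn ▸ key n hn le_rfl)
end

section
/- For every compact nonempty metric space X and every continuous map f : X → X, the set CR(f) of chain recurrent points is nonempty. -/
open Metric Set

variable {X : Type*} [MetricSpace X]

theorem stmt1 [CompactSpace X] [Nonempty X] (f : X → X) (hf : Continuous f) :
    (ChainRec f).Nonempty := by
  obtain ⟨x⟩ := ‹Nonempty X›
  obtain ⟨y, -, φ, hφ, hconv⟩ := isCompact_univ.tendsto_subseq
    (x := fun k => f^[k] x) (fun k => mem_univ _)
  refine ⟨y, fun ε hε => ?_⟩
  obtain ⟨δ, hδ, hδ'⟩ := Metric.uniformContinuous_iff.mp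
    (CompactSpace.uniformContinuous_of_continuous hf) (ε/2) (by linarith)
  set η := min δ (ε/2) with hηdef
  have hη : 0 < η := lt_min hδ (by linarith)
  obtain ⟨J, hJ⟩ := Metric.tendsto_atTop.mp hconv η hη
  set n := φ J with hn
  set m := φ (J+1) with hm
  have hnm : n < m := hφ (Nat.lt_succ_self J)
  have h1 : dist (f^[n] x) y < η := hJ J le_rfl
  have h2 : dist (f^[m] x) y < η := hJ (J+1) (Nat.le_succ J)
  have hηδ : η ≤ δ := min_le_left _ _
  have hηε : η ≤ ε/2 := min_le_right _ _
  set N := m - n with hN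
  have hNpos : 0 < N := Nat.sub_pos_of_lt hnm
  have hmN : n + N = m := by omega
  refine ⟨N, hNpos, fun i => if i = 0 ∨ N ≤ i then y else f^[n+i] x, ?_, ?_, ?_⟩
  · simp
  · simp
  · intro i hi
    have key : dist (f y) (f^[n+1] x) < ε/2 := by
      rw [Function.iterate_succ_apply']
      exact hδ' (by rw [dist_comm]; exact lt_of_lt_of_le h1 hηδ)
    rcases Nat.eq_zero_or_pos i with rfl | hipos
    · simp only [true_or, if_pos]
      rcases eq_or_lt_of_le (Nat.one_le_iff_ne_zero.mpr (Nat.pos_iff_ne_zero.mp hNpos)) with hN1 | hN1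
      · -- N = 1
        have : (1 = 0 ∨ N ≤ 1) := Or.inr (le_of_eq hN1.symm)
        rw [if_pos this]
        have hm1 : m = n + 1 := by omega
        calc dist (f y) y ≤ dist (f y) (f^[n+1] x) + dist (f^[n+1] x) y := dist_triangle _ _ _
          _ < ε/2 + ε/2 := by
              refine add_lt_add key ?_
              rw [← hm1]; exact lt_of_lt_of_le h2 hηε
          _ = ε := by ring
      · -- N > 1
        rw [if_neg (by omega)]
        calc dist (f y) (f^[n+1] x) < ε/2 := key
          _ < ε := by linarith
    · simp only
      rw [if_neg (show ¬(i = 0 ∨ N ≤ i) by omega)]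
      rcases eq_or_lt_of_le (Nat.succ_le_of_lt hi) with hiN | hiN
      · -- i + 1 = N
        rw [if_pos (Or.inr (le_of_eq hiN.symm))]
        have : f (f^[n+i] x) = f^[m] x := by
          rw [show m = (n+i)+1 by omega, Function.iterate_succ_apply']
        rw [this]
        calc dist (f^[m] x) y < η := h2
          _ ≤ ε/2 := hηε
          _ < ε := by linarith
      · -- i + 1 < N
        rw [if_neg (by omega),
          show n+(i+1) = (n+i)+1 by omega, Function.iterate_succ_apply', dist_self]
        exact hε
end

section
/- Let X be a compact metric space. The set-valued map f ↦ CR(f), from C(X,X) (with the uniform metric) to the space of nonempty closed subsets of X with the Hausdorff metric, is upper semi-continuous: for every f and every open set V ⊇ CR(f) there is δ > 0 such that every continuous g with sup-distance from f less than δ satisfies CR(g) ⊆ V. -/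
open Metric Set

variable {X : Type*} [MetricSpace X]

/-- Points admitting an ε-chain from themselves to themselves. -/
def AC (f : X → X) (ε : ℝ) : Set X :=
  {x | ∃ n : ℕ, 0 < n ∧ ∃ c : ℕ → X, c 0 = x ∧ c n = x ∧
    ∀ i < n, dist (f (c i)) (c (i+1)) < ε}

lemma AC_mono (f : X → X) {ε ε' : ℝ} (h : ε ≤ ε') : AC f ε ⊆ AC f ε' := by
  rintro x ⟨n, hn, c, h0, hN, hc⟩
  exact ⟨n, hn, c, h0, hN, fun i hi => lt_of_lt_of_le (hc i hi) h⟩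

lemma closure_AC (f : X → X) (hf : Continuous f) {ε : ℝ} (hε : 0 < ε) :
    closure (AC f (ε/3)) ⊆ AC f ε := by
  intro x hx
  obtain ⟨δ, hδ, hδf⟩ := Metric.continuousAt_iff.mp (hf.continuousAt (x := x)) (ε/3)
    (by linarith)
  have hr : 0 < min δ (ε/3) := lt_min hδ (by linarith)
  obtain ⟨y, hyA, hxy⟩ := Metric.mem_closure_iff.mp hx (min δ (ε/3)) hr
  obtain ⟨n, hn, c, h0, hN, hc⟩ := hyA
  have hxy3 : dist x y < ε/3 := lt_of_lt_of_le hxy (min_le_right _ _)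
  have hfxy : dist (f x) (f y) < ε/3 := by
    rw [dist_comm]
    exact hδf (by rw [dist_comm]; exact lt_of_lt_of_le hxy (min_le_left _ _))
  refine ⟨n, hn, fun i => if i = 0 ∨ i = n then x else c i, by simp, by simp, ?_⟩
  intro i hi
  simp only
  by_cases h0i : i = 0
  · subst h0i
    rw [if_pos (Or.inl rfl)]
    by_cases h1n : 0 + 1 = n
    · rw [if_pos (Or.inr h1n)]
      have h2 : dist (f y) y < ε/3 := by
        have := hc 0 hi
        rwa [h0, show (0:ℕ)+1 = n from h1n, hN] at this
      have h3 : dist y x < ε/3 := by rw [dist_comm]; exact hxy3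
      have h4 := dist_triangle4 (f x) (f y) y x
      linarith
    · rw [if_neg (by omega)]
      have h2 := hc 0 hi
      rw [h0] at h2
      have h4 := dist_triangle (f x) (f y) (c (0+1))
      linarith
  · rw [if_neg (by omega)]
    by_cases h1n : i + 1 = n
    · rw [if_pos (Or.inr h1n)]
      have h2 := hc i hi
      rw [h1n, hN] at h2
      have h3 : dist y x < ε/3 := by rw [dist_comm]; exact hxy3
      have h4 := dist_triangle (f (c i)) y x
      linarith
    · rw [if_neg (by omega)]
      have := hc i hi
      linarith

lemma exists_AC_subset [CompactSpace X] (f : X → X) (hf : Continuous f) (V : Set X)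
    (hV : IsOpen V) (hCR : ChainRec f ⊆ V) : ∃ ε > (0:ℝ), AC f ε ⊆ V := by
  set C : ℕ → Set X := fun n => closure (AC f (1/(n+1))) ∩ Vᶜ with hC
  by_cases hne : ∀ n, (C n).Nonempty
  · exfalso
    have hanti : Antitone C := by
      intro m n hmn
      apply Set.inter_subset_inter_left
      apply closure_mono
      apply AC_mono
      apply one_div_le_one_div_of_le
      · positivity
      · have : (m:ℝ) ≤ n := Nat.cast_le.mpr hmn
        linarith
    have hcomp : ∀ n, IsCompact (C n) :=
      fun n => (isClosed_closure.inter hV.isClosed_compl).isCompact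
    have hclosed : ∀ n, IsClosed (C n) :=
      fun n => isClosed_closure.inter hV.isClosed_compl
    obtain ⟨x, hx⟩ := IsCompact.nonempty_iInter_of_directed_nonempty_isCompact_isClosed
      C hanti.directed_ge hne hcomp hclosed
    simp only [Set.mem_iInter] at hx
    have hxV : x ∉ V := (hx 0).2
    apply hxV
    apply hCR
    intro ε hε
    obtain ⟨n, hn⟩ := exists_nat_one_div_lt (by positivity : (0:ℝ) < ε/3)
    have hxc : x ∈ closure (AC f (1/(n+1))) := (hx n).1
    have : x ∈ AC f ε := by
      apply closure_AC f hf hε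
      refine closure_mono (AC_mono f ?_) hxc
      push_cast at hn ⊢; linarith
    exact this
  · push_neg at hne
    obtain ⟨n, hn⟩ := hne
    refine ⟨1/(n+1), by positivity, ?_⟩
    intro x hx
    by_contra hxV
    have hmem : x ∈ C n := ⟨subset_closure hx, hxV⟩
    rw [hn] at hmem
    exact hmem

theorem stmt5 [CompactSpace X] (f : X → X) (hf : Continuous f) (V : Set X)
    (hV : IsOpen V) (hCR : ChainRec f ⊆ V) :
    ∃ δ > (0:ℝ), ∀ g : X → X, Continuous g →
      (∀ x, dist (f x) (g x) < δ) → ChainRec g ⊆ V := by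
  obtain ⟨ε, hε, hAC⟩ := exists_AC_subset f hf V hV hCR
  refine ⟨ε/2, by linarith, ?_⟩
  intro g _ hd x hx
  obtain ⟨n, hn, c, h0, hN, hc⟩ := hx (ε/2) (by linarith)
  apply hAC
  refine ⟨n, hn, c, h0, hN, ?_⟩
  intro i hi
  calc dist (f (c i)) (c (i+1)) ≤ dist (f (c i)) (g (c i)) + dist (g (c i)) (c (i+1)) :=
        dist_triangle _ _ _
    _ < ε/2 + ε/2 := add_lt_add (hd _) (hc i hi)
    _ = ε := by ring
end

section
/- Let X be a compact metric space, G ⊆ X a closed subset, r : X → G a retraction (continuous with r|G = id), and f : G → G continuous. Then the chain recurrent set of f (as a self-map of G) equals the chain recurrent set of the composition f ∘ r : X → X, i.e., CR(f) = CR(f ∘ r) as subsets of X. -/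
open Metric Set

variable {X : Type*} [MetricSpace X]

theorem stmt6 [CompactSpace X] (G : Set X) (hG : IsClosed G)
    (r : X → X) (hr : Continuous r) (hrG : ∀ x, r x ∈ G) (hret : ∀ x ∈ G, r x = x)
    (f : X → X) (hf : ContinuousOn f G) (hfG : MapsTo f G G) :
    ChainRecIn f G = ChainRec (f ∘ r) := by
  ext x
  constructor
  · rintro ⟨hxG, hx⟩
    intro ε hε
    obtain ⟨n, hn, c, hcG, h0, hN, hc⟩ := hx ε hε
    exact ⟨n, hn, c, h0, hN, fun i hi => by
      simpa [Function.comp, hret _ (hcG i hi.le)] using hc i hi⟩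
  · intro hx
    have hxG : x ∈ G := by
      rw [← hG.closure_eq, Metric.mem_closure_iff]
      intro ε hε
      obtain ⟨n, hn, c, h0, hN, hc⟩ := hx ε hε
      obtain ⟨m, rfl⟩ := Nat.exists_eq_succ_of_ne_zero hn.ne'
      refine ⟨f (r (c m)), hfG (hrG _), ?_⟩
      rw [dist_comm, ← hN]
      exact hc m (Nat.lt_succ_self m)
    refine ⟨hxG, fun ε hε => ?_⟩
    have hur := CompactSpace.uniformContinuous_of_continuous hr
    obtain ⟨δ, hδ, hδ'⟩ := Metric.uniformContinuous_iff.mp hur ε hε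
    obtain ⟨n, hn, c, h0, hN, hc⟩ := hx δ hδ
    refine ⟨n, hn, fun i => r (c i), fun i _ => hrG _,
      by show r (c 0) = x; rw [h0]; exact hret x hxG,
      by show r (c n) = x; rw [hN]; exact hret x hxG, fun i hi => ?_⟩
    have h2 := hδ' (hc i hi)
    rwa [Function.comp_apply, hret _ (hfG (hrG _))] at h2
end

section
/- Let X be a compact metric space and f : X → X continuous. Suppose there are open sets U_0 ⊆ U_1 ⊆ … ⊆ U_n and closed sets K_0 ⊆ K_1 ⊆ … ⊆ K_n with K_i ⊆ U_i and f(U_i) ⊆ K_i for all i = 0,…,n. Then CR(f) ⊆ (X \ U_n) ∪ (K_n \ U_{n-1}) ∪ (K_{n-1} \ U_{n-2}) ∪ … ∪ (K_1 \ U_0) ∪ K_0. -/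
open Metric Set

variable {X : Type*} [MetricSpace X]

theorem stmt7 [CompactSpace X] (f : X → X) (hf : Continuous f) (n : ℕ)
    (U K : ℕ → Set X)
    (hUopen : ∀ i ≤ n, IsOpen (U i)) (hKclosed : ∀ i ≤ n, IsClosed (K i))
    (hUmono : ∀ i < n, U i ⊆ U (i+1)) (hKmono : ∀ i < n, K i ⊆ K (i+1))
    (hKU : ∀ i ≤ n, K i ⊆ U i) (hfUK : ∀ i ≤ n, f '' U i ⊆ K i) :
    ChainRec f ⊆ (U n)ᶜ ∪ K 0 ∪ ⋃ i ∈ Finset.range n, (K (i+1) \ U i) := by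
  classical
  -- Key lemma: if x is chain recurrent and x ∈ U i (i ≤ n), then x ∈ K i.
  have aux : ∀ i ≤ n, ∀ x ∈ ChainRec f, x ∈ U i → x ∈ K i := by
    intro i hi x hx hxU
    obtain ⟨δ, hδ, hthick⟩ :=
      ((hKclosed i hi).isCompact).exists_thickening_subset_open (hUopen i hi) (hKU i hi)
    rw [← (hKclosed i hi).closure_eq, Metric.mem_closure_iff]
    intro ε hε
    obtain ⟨m, hm, c, hc0, hcm, hchain⟩ := hx (min ε δ) (lt_min hε hδ)
    have key : ∀ j ≤ m, c j ∈ U i := by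
      intro j
      induction j with
      | zero => intro _; rw [hc0]; exact hxU
      | succ k ih =>
        intro hk
        have hkU := ih (by omega)
        have hfK : f (c k) ∈ K i := hfUK i hi ⟨c k, hkU, rfl⟩
        have : c (k + 1) ∈ thickening δ (K i) := by
          rw [mem_thickening_iff]
          refine ⟨f (c k), hfK, ?_⟩
          rw [dist_comm]
          exact lt_of_lt_of_le (hchain k (by omega)) (min_le_right _ _)
        exact hthick this
    obtain ⟨m', rfl⟩ : ∃ m', m = m' + 1 := ⟨m - 1, by omega⟩
    refine ⟨f (c m'), hfUK i hi ⟨c m', key m' (by omega), rfl⟩, ?_⟩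
    rw [← hcm, dist_comm]
    exact (hchain m' (by omega)).trans_le (min_le_left _ _)
  intro x hx
  by_cases hxUn : x ∈ U n
  · have hex : ∃ i, x ∈ U i := ⟨n, hxUn⟩
    set i := Nat.find hex with hi
    have hxUi : x ∈ U i := Nat.find_spec hex
    have hin : i ≤ n := Nat.find_min' hex hxUn
    have hxKi : x ∈ K i := aux i hin x hx hxUi
    rcases Nat.eq_zero_or_eq_succ_pred i with h0 | hsucc
    · left; right; rw [h0] at hxKi; exact hxKi
    · right
      set j := i - 1 with hj
      have hij : i = j + 1 := hsucc
      have hxnotUj : x ∉ U j := Nat.find_min hex (by omega)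
      refine Set.mem_iUnion.2 ⟨j, Set.mem_iUnion.2 ⟨Finset.mem_range.2 (by omega), ?_⟩⟩
      exact ⟨by rw [← hij]; exact hxKi, hxnotUj⟩
  · left; left; exact hxUn
end

section
/- Let X be a compact metric space, f : X → X continuous, U ⊆ X open, and K ⊆ U closed, with f(U) ⊆ K. Then CR(f) ∩ U ⊆ K, i.e., every chain recurrent point lying in U lies in K. -/
open Metric Set

variable {X : Type*} [MetricSpace X]

theorem stmt8 [CompactSpace X] (f : X → X) (hf : Continuous f) (U K : Set X)
    (hU : IsOpen U) (hK : IsClosed K) (hKU : K ⊆ U) (hfUK : f '' U ⊆ K) :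
    ChainRec f ∩ U ⊆ K := by
  rintro x ⟨hx, hxU⟩
  by_contra hxK
  have hKne : K.Nonempty := ⟨f x, hfUK ⟨x, hxU, rfl⟩⟩
  have hKc : IsCompact K := hK.isCompact
  obtain ⟨δ, hδ, hth⟩ := hKc.exists_thickening_subset_open hU hKU
  have hr : 0 < infDist x K := (hK.notMem_iff_infDist_pos hKne).1 hxK
  set ε := min δ (infDist x K) with hε
  have hεpos : 0 < ε := lt_min hδ hr
  obtain ⟨n, hn, c, hc0, hcn, hchain⟩ := hx ε hεpos
  -- every c i for 1 ≤ i ≤ n is in thickening ε K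
  have key : ∀ i, i ≤ n → c i ∈ U ∧ (1 ≤ i → c i ∈ thickening ε K) := by
    intro i
    induction i with
    | zero => intro _; exact ⟨hc0 ▸ hxU, by omega⟩
    | succ j ih =>
      intro hjn
      have hjU : c j ∈ U := (ih (by omega)).1
      have hfK : f (c j) ∈ K := hfUK ⟨c j, hjU, rfl⟩
      have hd : dist (f (c j)) (c (j+1)) < ε := hchain j (by omega)
      have hmem : c (j+1) ∈ thickening ε K := by
        rw [mem_thickening_iff]
        exact ⟨f (c j), hfK, by rwa [dist_comm]⟩
      refine ⟨?_, fun _ => hmem⟩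
      exact hth (thickening_mono (min_le_left _ _) K hmem)
  have hxth : x ∈ thickening ε K := hcn ▸ (key n le_rfl).2 hn
  rw [mem_thickening_iff_infDist_lt hKne] at hxth
  exact absurd hxth (not_lt.2 (min_le_right _ _))
end

section
/- Let X be a compact metric space. For each n ≥ 1, the set A_n = { f ∈ C(X,X) : every connected component of CR(f) has diameter < 1/n } is open in C(X,X) with the uniform metric. -/
open Metric Set

variable {X : Type*} [MetricSpace X]

/-- Points admitting an `ε`-chain from themselves back to themselves. -/
def RsetAux (f : X → X) (ε : ℝ) : Set X :=
  {x | ∃ n : ℕ, 0 < n ∧ ∃ c : ℕ → X, c 0 = x ∧ c n = x ∧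
    ∀ i < n, dist (f (c i)) (c (i+1)) < ε}

lemma chainRec_subset_RsetAux (f : X → X) {ε : ℝ} (hε : 0 < ε) :
    ChainRec f ⊆ RsetAux f ε := fun _ hx => hx ε hε

lemma RsetAux_mono (f : X → X) {ε ε' : ℝ} (h : ε ≤ ε') : RsetAux f ε ⊆ RsetAux f ε' := by
  rintro x ⟨n, hn, c, h0, hn', hc⟩
  exact ⟨n, hn, c, h0, hn', fun i hi => (hc i hi).trans_le h⟩

/-- Perturbing the base point of an `ε`-chain loop. -/
lemma endpoint_perturbAux [CompactSpace X] {f : X → X} (hf : Continuous f) {ε ε' : ℝ}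
    (hε : 0 < ε) (h : ε < ε') :
    ∃ η > 0, ∀ x x' : X, dist x x' < η → x' ∈ RsetAux f ε → x ∈ RsetAux f ε' := by
  have huc : UniformContinuous f := CompactSpace.uniformContinuous_of_continuous hf
  have h2 : 0 < (ε' - ε) / 2 := by linarith
  obtain ⟨δ, hδ, hδ'⟩ := Metric.uniformContinuous_iff.mp huc _ h2
  refine ⟨min δ ((ε' - ε) / 2), lt_min hδ h2, ?_⟩
  rintro x x' hxx' ⟨m, hm, c, h0, hmn, hc⟩
  set c' : ℕ → X := fun j => if j = 0 ∨ j = m then x else c j with hc'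
  have hm0 : m ≠ 0 := hm.ne'
  refine ⟨m, hm, c', by simp [hc'], by simp [hc'], ?_⟩
  intro i hi
  have key1 : dist (f (c' i)) (f (c i)) ≤ (ε' - ε) / 2 := by
    by_cases h0i : i = 0
    · have e1 : c' i = x := by simp [hc', h0i]
      have e2 : c i = x' := by rw [h0i, h0]
      rw [e1, e2]
      exact le_of_lt (hδ' (lt_of_lt_of_le hxx' (min_le_left _ _)))
    · have e1 : c' i = c i := by
        simp only [hc']
        rw [if_neg]
        push_neg
        exact ⟨h0i, hi.ne⟩
      rw [e1, dist_self]
      linarith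
  have key2 : dist (c (i+1)) (c' (i+1)) ≤ (ε' - ε) / 2 := by
    by_cases him : i + 1 = m
    · have e1 : c' (i+1) = x := by simp [hc', him]
      have e2 : c (i+1) = x' := by rw [him, hmn]
      rw [e1, e2, dist_comm]
      exact le_of_lt (lt_of_lt_of_le hxx' (min_le_right _ _))
    · have e1 : c' (i+1) = c (i+1) := by
        simp only [hc']
        rw [if_neg]
        push_neg
        exact ⟨Nat.succ_ne_zero i, him⟩
      rw [e1, dist_self]
      linarith
  have hmid : dist (f (c i)) (c (i+1)) < ε := hc i hi
  have htri : dist (f (c' i)) (c' (i+1)) ≤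
      dist (f (c' i)) (f (c i)) + dist (f (c i)) (c (i+1)) + dist (c (i+1)) (c' (i+1)) :=
    dist_triangle4 _ _ _ _
  linarith

lemma closure_RsetAux [CompactSpace X] {f : X → X} (hf : Continuous f) {ε ε' : ℝ}
    (hε : 0 < ε) (h : ε < ε') : closure (RsetAux f ε) ⊆ RsetAux f ε' := by
  obtain ⟨η, hη, H⟩ := endpoint_perturbAux hf hε h
  intro x hx
  obtain ⟨x', hx', hd⟩ := Metric.mem_closure_iff.mp hx η hη
  exact H x x' hd hx'

lemma isClosed_chainRec [CompactSpace X] {f : X → X} (hf : Continuous f) :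
    IsClosed (ChainRec f) := by
  refine isClosed_of_closure_subset ?_
  intro x hx ε hε
  have h1 : ChainRec f ⊆ RsetAux f (ε/2) := chainRec_subset_RsetAux f (half_pos hε)
  exact closure_RsetAux hf (half_pos hε) (half_lt_self hε) (closure_mono h1 hx)

/-- Upper semicontinuity of the chain recurrent set. -/
lemma usc_chainRec [CompactSpace X] (f : C(X, X)) {U : Set X} (hU : IsOpen U)
    (hCR : ChainRec ⇑f ⊆ U) :
    ∃ δ > 0, ∀ g : C(X, X), dist g f < δ → ChainRec ⇑g ⊆ U := by
  have hposk : ∀ k : ℕ, (0:ℝ) < 1 / (k + 1) := fun k => by positivity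
  obtain ⟨ε, hε, hRU⟩ : ∃ ε > (0:ℝ), RsetAux ⇑f ε ⊆ U := by
    have hsub : Uᶜ ⊆ ⋃ k : ℕ, (closure (RsetAux ⇑f (1 / (k + 1))))ᶜ := by
      intro x hx
      by_contra hcon
      simp only [mem_iUnion, mem_compl_iff, not_exists, not_not] at hcon
      refine hx (hCR ?_)
      intro ε hε
      obtain ⟨k, hk⟩ := exists_nat_one_div_lt hε
      exact closure_RsetAux f.continuous (hposk k) hk (hcon k)
    have hcpt : IsCompact (Uᶜ) := hU.isClosed_compl.isCompact
    obtain ⟨s, hs⟩ := hcpt.elim_finite_subcover _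
      (fun k : ℕ => isClosed_closure.isOpen_compl) hsub
    set N := s.sup id with hN
    refine ⟨1 / (N + 1), hposk N, ?_⟩
    have hmain : Uᶜ ⊆ (closure (RsetAux ⇑f (1 / (N + 1))))ᶜ := by
      refine hs.trans (iUnion₂_subset fun k hk => compl_subset_compl.mpr
        (closure_mono (RsetAux_mono _ ?_)))
      have hkN : k ≤ N := Finset.le_sup (f := id) hk
      have : (k:ℝ) + 1 ≤ (N:ℝ) + 1 := by exact_mod_cast Nat.succ_le_succ hkN
      exact one_div_le_one_div_of_le (by positivity) this
    exact subset_closure.trans (compl_subset_compl.mp hmain)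
  refine ⟨ε / 2, half_pos hε, ?_⟩
  intro g hg x hx
  apply hRU
  obtain ⟨m, hm, c, h0, hmn, hc⟩ := hx (ε/2) (half_pos hε)
  refine ⟨m, hm, c, h0, hmn, fun i hi => ?_⟩
  have h1 : dist (f (c i)) (c (i+1)) ≤ dist (f (c i)) (g (c i)) + dist (g (c i)) (c (i+1)) :=
    dist_triangle _ _ _
  have h2 : dist (f (c i)) (g (c i)) ≤ dist g f := by
    rw [dist_comm]
    exact ContinuousMap.dist_apply_le_dist _
  have h3 : dist (g (c i)) (c (i+1)) < ε / 2 := hc i hi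
  linarith

/-- In a compact T2 space, a clopen set squeezes between a connected component and
any open neighbourhood of it. -/
lemma exists_clopen_superset {α : Type*} [TopologicalSpace α] [T2Space α] [CompactSpace α]
    (x : α) {W : Set α} (hW : IsOpen W) (h : connectedComponent x ⊆ W) :
    ∃ Z : Set α, IsClopen Z ∧ x ∈ Z ∧ Z ⊆ W := by
  have H1 := hW.isClosed_compl.isCompact.inter_iInter_nonempty
    (fun s : { s : Set α // IsClopen s ∧ x ∈ s } => (s : Set α)) (fun s => s.2.1.1)
  have H2 : ¬ (Wᶜ ∩ ⋂ s : { s : Set α // IsClopen s ∧ x ∈ s }, (s : Set α)).Nonempty := by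
    rw [← connectedComponent_eq_iInter_isClopen]
    rintro ⟨y, hy1, hy2⟩
    exact hy1 (h hy2)
  have H3 := mt H1 H2
  push_neg at H3
  obtain ⟨u, hu⟩ := H3
  refine ⟨⋂ s ∈ u, (s : Set α), isClopen_biInter_finset fun s _ => s.2.1,
    mem_iInter₂.2 fun s _ => s.2.2, ?_⟩
  intro y hy
  by_contra hyW
  have hmem : y ∈ Wᶜ ∩ ⋂ s ∈ u, (s : Set α) := ⟨hyW, hy⟩
  rw [hu] at hmem
  exact hmem

/-- A compact set whose components are small can be covered by finitely many
pairwise disjoint small open sets. -/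
lemma exists_disjoint_open_cover [CompactSpace X] {K : Set X} (hK : IsClosed K) {c : ℝ}
    (hc : 0 < c) (h : ∀ x ∈ K, diam (connectedComponentIn K x) < c) :
    ∃ U : ℕ → Set X, (∀ i, IsOpen (U i)) ∧ Pairwise (Function.onFun Disjoint U) ∧
      (∀ i, diam (U i) < c) ∧ K ⊆ ⋃ i, U i := by
  have hbdd : ∀ s : Set X, Bornology.IsBounded s := fun s =>
    isCompact_univ.isBounded.subset (subset_univ s)
  haveI : CompactSpace K := isCompact_iff_compactSpace.mp hK.isCompact
  -- Step 1: small clopen neighbourhoods in `K`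
  have key : ∀ z : K, ∃ Z : Set K, IsClopen Z ∧ z ∈ Z ∧ diam (Subtype.val '' Z) < c := by
    intro z
    have hz : (z : X) ∈ K := z.2
    have himg : connectedComponentIn K (z : X) = Subtype.val '' connectedComponent z := by
      rw [connectedComponentIn_eq_image hz]
    have hCd : diam (Subtype.val '' connectedComponent z) < c := himg ▸ h _ hz
    set C := Subtype.val '' connectedComponent z with hC
    set r := (c - diam C) / 3 with hr
    have hr0 : 0 < r := by
      rw [hr]
      linarith
    have hsub : connectedComponent z ⊆ Subtype.val ⁻¹' (thickening r C) := fun y hy =>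
      self_subset_thickening hr0 C (mem_image_of_mem _ hy)
    obtain ⟨Z, hZclo, hzZ, hZsub⟩ := exists_clopen_superset z
      (isOpen_thickening.preimage continuous_subtype_val) hsub
    refine ⟨Z, hZclo, hzZ, ?_⟩
    have himg2 : Subtype.val '' Z ⊆ thickening r C := by
      rintro _ ⟨y, hy, rfl⟩
      exact hZsub hy
    calc diam (Subtype.val '' Z) ≤ diam (thickening r C) := diam_mono himg2 (hbdd _)
      _ ≤ diam C + 2 * r := diam_thickening_le _ hr0.le
      _ < c := by rw [hr]; linarith
  choose Z hZclo hZmem hZdiam using key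
  -- Step 2: finite subcover, indexed by ℕ
  obtain ⟨t, ht⟩ := isCompact_univ.elim_finite_subcover (fun z : K => Z z)
    (fun z => (hZclo z).2) (fun y _ => mem_iUnion.mpr ⟨y, hZmem y⟩)
  set l := t.toList with hl
  set m := l.length with hm
  set V : ℕ → Set K := fun k => if hk : k < m then Z (l.get ⟨k, hk⟩) else ∅ with hV
  have hVclo : ∀ k, IsClopen (V k) := by
    intro k
    rw [hV]
    dsimp only
    split
    · exact hZclo _
    · exact isClopen_empty
  have hVempty : ∀ k, m ≤ k → V k = ∅ := by
    intro k hk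
    rw [hV]
    exact dif_neg (not_lt.mpr hk)
  have hVcover : (univ : Set K) ⊆ ⋃ k, V k := by
    intro y hy
    have := ht hy
    simp only [mem_iUnion] at this
    obtain ⟨z, hzt, hyz⟩ := this
    obtain ⟨i, hi⟩ := List.mem_iff_get.mp (Finset.mem_toList.mpr hzt)
    refine mem_iUnion.mpr ⟨(i : ℕ), ?_⟩
    rw [hV]
    dsimp only
    rw [dif_pos i.2]
    have : l.get ⟨(i : ℕ), i.2⟩ = z := by
      rw [← hi]
    rw [this]
    exact hyz
  have hVdiam : ∀ k, diam (Subtype.val '' V k) < c := by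
    intro k
    rw [hV]
    dsimp only
    split
    · exact hZdiam _
    · simpa using hc
  -- Step 3: disjointify
  set D := disjointed V with hD
  have hDclo : ∀ k, IsClopen (D k) := by
    have hP : ∀ n, IsClopen (partialSups V n) := by
      intro n
      induction n with
      | zero => simpa using hVclo 0
      | succ n ih =>
        rw [partialSups_add_one]
        exact ih.union (hVclo _)
    intro k
    cases k with
    | zero => rw [hD, disjointed_zero]; exact hVclo 0
    | succ n => rw [hD, disjointed_add_one]; exact (hVclo _).diff (hP n)
  have hDsub : ∀ k, D k ⊆ V k := fun k => disjointed_le V k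
  set Vx : ℕ → Set X := fun k => Subtype.val '' D k with hVx
  have hVxcpt : ∀ k, IsCompact (Vx k) :=
    fun k => ((hDclo k).1.isCompact).image continuous_subtype_val
  have hVxdisj : Pairwise (Function.onFun Disjoint Vx) := fun i j hij =>
    (disjoint_image_iff Subtype.val_injective).mpr (disjoint_disjointed V hij)
  have hVxdiam : ∀ k, diam (Vx k) < c := fun k =>
    lt_of_le_of_lt (diam_mono (image_mono (hDsub k)) (hbdd _)) (hVdiam k)
  have hVxempty : ∀ k, m ≤ k → Vx k = ∅ := by
    intro k hk
    have : D k ⊆ (∅ : Set K) := (hVempty k hk) ▸ hDsub k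
    have hDe : D k = ∅ := subset_empty_iff.mp this
    rw [hVx]
    simp [hDe]
  have hVxcover : K ⊆ ⋃ k, Vx k := by
    intro y hy
    have h1 : (⟨y, hy⟩ : K) ∈ ⋃ k, D k := by
      rw [hD, iUnion_disjointed]
      exact hVcover (mem_univ _)
    obtain ⟨k, hk⟩ := mem_iUnion.mp h1
    exact mem_iUnion.mpr ⟨k, ⟨_, hk, rfl⟩⟩
  -- Step 4: choose a common thickening radius
  have hev1 : ∀ᶠ δ in nhdsWithin (0:ℝ) (Ioi 0),
      ∀ k ∈ Finset.range m, diam (thickening δ (Vx k)) < c := by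
    rw [Filter.eventually_all_finset]
    intro k _
    have hrk : 0 < (c - diam (Vx k)) / 2 := by
      have := hVxdiam k
      linarith
    filter_upwards [Ioo_mem_nhdsGT_of_mem (show (0:ℝ) ∈ Ico 0 ((c - diam (Vx k)) / 2)
        from ⟨le_refl _, hrk⟩)] with δ hδ
    calc diam (thickening δ (Vx k)) ≤ diam (Vx k) + 2 * δ :=
          diam_thickening_le _ (le_of_lt hδ.1)
      _ < c := by
          have := hδ.2
          linarith
  have hev2 : ∀ᶠ δ in nhdsWithin (0:ℝ) (Ioi 0),
      ∀ p ∈ Finset.range m ×ˢ Finset.range m, p.1 ≠ p.2 →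
        Disjoint (thickening δ (Vx p.1)) (thickening δ (Vx p.2)) := by
    rw [Filter.eventually_all_finset]
    rintro ⟨i, j⟩ _
    dsimp only
    rcases eq_or_ne i j with rfl | hij
    · exact Filter.Eventually.of_forall fun δ h => absurd rfl h
    · obtain ⟨δ₀, hδ₀, hdisj⟩ := (hVxdisj hij).exists_thickenings (hVxcpt i) (hVxcpt j).isClosed
      filter_upwards [Ioo_mem_nhdsGT_of_mem (show (0:ℝ) ∈ Ico 0 δ₀ from ⟨le_refl _, hδ₀⟩)]
        with δ hδ _
      exact hdisj.mono (thickening_mono hδ.2.le _) (thickening_mono hδ.2.le _)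
  have hev3 : ∀ᶠ δ in nhdsWithin (0:ℝ) (Ioi 0), (0:ℝ) < δ :=
    eventually_nhdsWithin_of_forall fun x hx => hx
  obtain ⟨δ, ⟨hδ1, hδ2⟩, hδ0⟩ := ((hev1.and hev2).and hev3).exists
  -- Step 5: conclude
  refine ⟨fun k => thickening δ (Vx k), fun k => isOpen_thickening, ?_, ?_, ?_⟩
  · intro i j hij
    by_cases hi : i < m
    · by_cases hj : j < m
      · exact hδ2 (i, j) (Finset.mem_product.mpr
          ⟨Finset.mem_range.mpr hi, Finset.mem_range.mpr hj⟩) hij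
      · have : Vx j = ∅ := hVxempty j (not_lt.mp hj)
        simp only [Function.onFun, this, thickening_empty]
        exact disjoint_empty _
    · have : Vx i = ∅ := hVxempty i (not_lt.mp hi)
      simp only [Function.onFun, this, thickening_empty]
      exact empty_disjoint _
  · intro k
    by_cases hk : k < m
    · exact hδ1 k (Finset.mem_range.mpr hk)
    · have hVk : Vx k = ∅ := hVxempty k (not_lt.mp hk)
      simp only [hVk, thickening_empty]
      simpa using hc
  · exact hVxcover.trans (iUnion_mono fun k => self_subset_thickening hδ0 _)

theorem stmt9 [CompactSpace X] (n : ℕ) (hn : 1 ≤ n) :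
    IsOpen {f : C(X, X) | ∀ x ∈ ChainRec (⇑f),
      Metric.diam (connectedComponentIn (ChainRec (⇑f)) x) < 1 / (n:ℝ)} := by
  have hbdd : ∀ s : Set X, Bornology.IsBounded s := fun s =>
    isCompact_univ.isBounded.subset (subset_univ s)
  have hc : (0:ℝ) < 1 / (n:ℝ) := by
    have : (0:ℝ) < (n:ℝ) := by exact_mod_cast Nat.lt_of_lt_of_le Nat.zero_lt_one hn
    positivity
  rw [Metric.isOpen_iff]
  intro f hf
  have hclosed : IsClosed (ChainRec ⇑f) := isClosed_chainRec f.continuous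
  obtain ⟨U, hUo, hUd, hUdiam, hKU⟩ := exists_disjoint_open_cover hclosed hc hf
  obtain ⟨δ, hδ, husc⟩ := usc_chainRec f (isOpen_iUnion hUo) hKU
  refine ⟨δ, hδ, ?_⟩
  intro g hg
  have hsub : ChainRec ⇑g ⊆ ⋃ i, U i := husc g (mem_ball.mp hg)
  intro x hx
  set C := connectedComponentIn (ChainRec ⇑g) x with hCdef
  have hCpre : IsPreconnected C := isPreconnected_connectedComponentIn
  have hxC : x ∈ C := mem_connectedComponentIn hx
  have hCsub : C ⊆ ⋃ i, U i := (connectedComponentIn_subset _ _).trans hsub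
  obtain ⟨i, hi⟩ := mem_iUnion.mp (hCsub hxC)
  have hCUi : C ⊆ U i := by
    refine hCpre.subset_left_of_subset_union (v := ⋃ j, ⋃ _ : j ≠ i, U j) (hUo i)
      (isOpen_iUnion fun j => isOpen_iUnion fun _ => hUo j) ?_ ?_ ⟨x, hxC, hi⟩
    · rw [disjoint_iUnion_right]
      intro j
      rw [disjoint_iUnion_right]
      intro hji
      exact hUd hji.symm
    · intro y hy
      obtain ⟨j, hj⟩ := mem_iUnion.mp (hCsub hy)
      by_cases hji : j = i
      · exact Or.inl (hji ▸ hj)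
      · exact Or.inr (mem_iUnion.mpr ⟨j, mem_iUnion.mpr ⟨hji, hj⟩⟩)
  calc diam C ≤ diam (U i) := diam_mono hCUi (hbdd _)
    _ < 1 / (n:ℝ) := hUdiam i
end

section
/- Let X be a compact metric space. The set { f ∈ C(X,X) : dim CR(f) = 0 } is a Gδ subset of C(X,X), where dim is the topological (covering) dimension. Equivalently, it equals the intersection over n of the open sets { f : every connected component of CR(f) has diameter < 1/n }. -/
open Metric Set

variable {X : Type*} [MetricSpace X]

namespace Stmt10Aux

/-- points admitting a periodic η-chain -/
def E (f : X → X) (η : ℝ) : Set X :=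
  {x | ∃ n : ℕ, 0 < n ∧ ∃ c : ℕ → X, c 0 = x ∧ c n = x ∧
    ∀ i < n, dist (f (c i)) (c (i+1)) < η}

lemma E_mono {f : X → X} {η η' : ℝ} (h : η ≤ η') : E f η ⊆ E f η' := by
  rintro x ⟨n, hn, c, h0, hn', hg⟩
  exact ⟨n, hn, c, h0, hn', fun i hi => lt_of_lt_of_le (hg i hi) h⟩

lemma closure_E_subset {f : X → X} (hf : Continuous f) {η η' : ℝ} (h : η < η') :
    closure (E f η) ⊆ E f η' := by
  intro x hx
  have hεpos : 0 < (η' - η) / 2 := by linarith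
  obtain ⟨δ, hδpos, hδ⟩ := Metric.continuousAt_iff.mp hf.continuousAt ((η' - η) / 2) hεpos
  obtain ⟨y, hyE, hyd⟩ := Metric.mem_closure_iff.mp hx (min δ ((η' - η) / 2))
    (lt_min hδpos hεpos)
  obtain ⟨n, hn, c, h0, hn', hg⟩ := hyE
  have hxy : dist x y < δ := lt_of_lt_of_le hyd (min_le_left _ _)
  have hxy2 : dist x y < (η' - η) / 2 := lt_of_lt_of_le hyd (min_le_right _ _)
  have hfxy : dist (f x) (f y) < (η' - η) / 2 := by
    rw [dist_comm]; exact hδ (by rwa [dist_comm])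
  classical
  set c' : ℕ → X := fun i => if i = 0 ∨ i = n then x else c i with hc'
  refine ⟨n, hn, c', by simp [hc'], by simp [hc'], ?_⟩
  intro i hi
  have hi' : i ≠ n := Nat.ne_of_lt hi
  rcases Nat.eq_zero_or_pos i with rfl | hi0
  · -- i = 0
    have h00 : c' 0 = x := by simp [hc']
    have hg0 : dist (f y) (c 1) < η := by have := hg 0 hi; rwa [h0] at this
    rcases eq_or_ne 1 n with h1n | h1n
    · have h01 : c' 1 = x := by simp [hc', h1n]
      rw [h00, h01]
      have hc1 : c 1 = y := by rw [h1n, hn']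
      rw [hc1] at hg0
      calc dist (f x) x ≤ dist (f x) (f y) + dist (f y) y + dist y x := dist_triangle4 _ _ _ _
        _ < (η' - η) / 2 + η + (η' - η) / 2 := by
            have := dist_comm x y ▸ hxy2
            exact add_lt_add (add_lt_add hfxy hg0) this
        _ = η' := by ring
    · have h01 : c' 1 = c 1 := by simp [hc', h1n]
      rw [h00, h01]
      calc dist (f x) (c 1) ≤ dist (f x) (f y) + dist (f y) (c 1) := dist_triangle _ _ _
        _ < (η' - η) / 2 + η := add_lt_add hfxy hg0
        _ ≤ η' := by linarith
  · -- i > 0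
    have hii : c' i = c i := by simp [hc', Nat.pos_iff_ne_zero.mp hi0, hi']
    rw [hii]
    rcases eq_or_ne (i + 1) n with hsn | hsn
    · have : c' (i + 1) = x := by simp [hc', hsn]
      rw [this]
      have hgn : dist (f (c i)) y < η := by
        have := hg i hi; rwa [hsn, hn'] at this
      calc dist (f (c i)) x ≤ dist (f (c i)) y + dist y x := dist_triangle _ _ _
        _ < η + (η' - η) / 2 := add_lt_add hgn (dist_comm x y ▸ hxy2)
        _ ≤ η' := by linarith
    · have : c' (i + 1) = c (i + 1) := by simp [hc', hsn]
      rw [this]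
      exact lt_trans (hg i hi) h

lemma chainRec_eq (f : X → X) (hf : Continuous f) :
    ChainRec f = ⋂ k : ℕ, closure (E f (1 / (k + 1))) := by
  ext x
  constructor
  · intro hx
    refine mem_iInter.mpr fun k => subset_closure ?_
    exact hx (1 / (k + 1)) (by positivity)
  · intro hx ε hε
    obtain ⟨k, hk⟩ := exists_nat_one_div_lt (half_pos hε)
    have h1 : closure (E f (1 / (k + 1))) ⊆ E f (2 / (k + 1)) := by
      apply closure_E_subset hf
      have hkpos : (0:ℝ) < (k:ℝ) + 1 := by positivity
      rw [div_lt_div_iff₀ hkpos hkpos]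
      nlinarith
    have h2 : E f (2 / (k + 1)) ⊆ E f ε := by
      apply E_mono
      have hkpos : (0:ℝ) < (k:ℝ) + 1 := by positivity
      rw [div_lt_div_iff₀ hkpos two_pos] at hk
      rw [div_le_iff₀ hkpos]
      linarith
    exact h2 (h1 (mem_iInter.mp hx k))

lemma isClosed_chainRec (f : X → X) (hf : Continuous f) : IsClosed (ChainRec f) := by
  rw [chainRec_eq f hf]
  exact isClosed_iInter fun k => isClosed_closure


/-- Upper semicontinuity of the chain recurrent set. -/
lemma usc [CompactSpace X] (f : C(X, X)) {U : Set X} (hU : IsOpen U)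
    (hsub : ChainRec ⇑f ⊆ U) :
    ∃ δ > (0:ℝ), ∀ g : C(X, X), dist g f < δ → ChainRec ⇑g ⊆ U := by
  set K : ℕ → Set X := fun k => closure (E ⇑f (1 / (k + 1))) with hK
  have hKanti : ∀ {k l : ℕ}, k ≤ l → K l ⊆ K k := by
    intro k l hkl
    apply closure_mono
    apply E_mono
    apply one_div_le_one_div_of_le (by positivity)
    have : (k:ℝ) ≤ l := Nat.cast_le.mpr hkl
    linarith
  have hcov : Uᶜ ⊆ ⋃ k : ℕ, (K k)ᶜ := by
    intro z hz
    rw [mem_iUnion]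
    by_contra hcon
    push_neg at hcon
    have : z ∈ ChainRec ⇑f := by
      rw [chainRec_eq ⇑f f.continuous]
      exact mem_iInter.mpr fun k => not_not.mp (hcon k)
    exact hz (hsub this)
  obtain ⟨t, ht⟩ := (hU.isClosed_compl.isCompact).elim_finite_subcover
    (fun k : ℕ => (K k)ᶜ) (fun k => (isClosed_closure).isOpen_compl) hcov
  rcases t.eq_empty_or_nonempty with rfl | htne
  · refine ⟨1, one_pos, fun g _ => ?_⟩
    intro z hz
    by_contra hzU
    have := ht hzU
    simp at this
  · set N := t.max' htne with hN
    have hKU : K N ⊆ U := by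
      intro z hz
      by_contra hzU
      have := ht hzU
      rw [Set.mem_iUnion₂] at this
      obtain ⟨k, hk, hzk⟩ := this
      exact hzk (hKanti (t.le_max' k hk) hz)
    refine ⟨1 / (2 * (N + 1)), by positivity, fun g hg => ?_⟩
    intro z hz
    apply hKU
    apply subset_closure
    have h1 : z ∈ E ⇑g (1 / (2 * (N + 1))) := hz _ (by positivity)
    obtain ⟨n, hn, c, h0, hn', hgap⟩ := h1
    refine ⟨n, hn, c, h0, hn', fun i hi => ?_⟩
    calc dist (f (c i)) (c (i + 1))
        ≤ dist (f (c i)) (g (c i)) + dist (g (c i)) (c (i + 1)) := dist_triangle _ _ _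
      _ < dist f g + 1 / (2 * (N + 1)) := by
          apply add_lt_add_of_le_of_lt (ContinuousMap.dist_apply_le_dist _) (hgap i hi)
      _ < 1 / (2 * (N + 1)) + 1 / (2 * (N + 1)) := by
          rw [dist_comm] at hg; linarith
      _ = 1 / (N + 1) := by
          have : ((N:ℝ) + 1) ≠ 0 := by positivity
          field_simp
          norm_num


/-- A compact set all of whose components are singletons can be covered by finitely many
pairwise disjoint open sets of small diameter. -/
lemma decomp {K : Set X} (hK : IsCompact K)
    (hcomp : ∀ x ∈ K, connectedComponentIn K x = {x}) {ε : ℝ} (hε : 0 < ε) :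
    ∃ (m : ℕ) (U : Fin m → Set X), (∀ i, IsOpen (U i)) ∧ Pairwise (Function.onFun Disjoint U) ∧
      (∀ i, ∀ x ∈ U i, ∀ y ∈ U i, dist x y < ε) ∧ K ⊆ ⋃ i, U i := by
  classical
  haveI : CompactSpace K := isCompact_iff_compactSpace.mp hK
  haveI : TotallyDisconnectedSpace K := by
    rw [totallyDisconnectedSpace_iff_connectedComponent_singleton]
    intro y
    have h1 := hcomp y.1 y.2
    rw [connectedComponentIn_eq_image y.2] at h1
    apply Set.eq_singleton_iff_unique_mem.mpr
    refine ⟨mem_connectedComponent, fun z hz => ?_⟩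
    have : z.1 ∈ ({y.1} : Set X) := h1 ▸ Set.mem_image_of_mem _ hz
    exact Subtype.ext this
  -- clopen neighborhoods inside small balls
  have hV : ∀ y : K, ∃ V : Set K, IsClopen V ∧ y ∈ V ∧
      V ⊆ Subtype.val ⁻¹' (ball (y : X) (ε / 4)) := by
    intro y
    apply compact_exists_isClopen_in_isOpen
      (isOpen_ball.preimage continuous_subtype_val)
    simp only [Set.mem_preimage]
    exact Metric.mem_ball_self (by positivity : (0:ℝ) < ε / 4)
  choose V hVclopen hVmem hVball using hV
  obtain ⟨s, hs⟩ := isCompact_univ.elim_finite_subcover V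
    (fun y => (hVclopen y).2) (fun z _ => Set.mem_iUnion.mpr ⟨z, hVmem z⟩)
  set m := s.card with hm
  set e := s.equivFin with he
  set V' : Fin m → Set K := fun i => V ((e.symm i) : K) with hV'
  -- disjointify
  set W : Fin m → Set K := fun i => V' i \ ⋃ j ∈ Finset.univ.filter (· < i), V' j with hW
  have hWclopen : ∀ i, IsClopen (W i) := by
    intro i
    exact ((hVclopen _)).diff (Set.Finite.isClopen_biUnion (Finset.finite_toSet _)
      (fun j _ => hVclopen _))
  have hWsub : ∀ i, W i ⊆ V' i := fun i => Set.diff_subset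
  have hWdisj : Pairwise (Function.onFun Disjoint W) := by
    intro i j hij
    rcases hij.lt_or_gt with hlt | hlt
    · refine Set.disjoint_left.mpr fun z hzi hzj => ?_
      exact hzj.2 (Set.mem_biUnion (Finset.mem_filter.mpr ⟨Finset.mem_univ _, hlt⟩) (hWsub i hzi))
    · refine Set.disjoint_left.mpr fun z hzi hzj => ?_
      exact hzi.2 (Set.mem_biUnion (Finset.mem_filter.mpr ⟨Finset.mem_univ _, hlt⟩) (hWsub j hzj))
  have hWcover : ∀ z : K, ∃ i, z ∈ W i := by
    intro z
    have hz : z ∈ ⋃ y ∈ s, V y := hs (Set.mem_univ z)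
    have hne : (Finset.univ.filter (fun i : Fin m => z ∈ V' i)).Nonempty := by
      rw [Set.mem_iUnion₂] at hz
      obtain ⟨y, hys, hzy⟩ := hz
      refine ⟨e ⟨y, hys⟩, ?_⟩
      simp only [Finset.mem_filter, Finset.mem_univ, true_and, hV']
      rw [Equiv.symm_apply_apply]
      exact hzy
    set i₀ := (Finset.univ.filter (fun i : Fin m => z ∈ V' i)).min' hne with hi₀
    have hzi₀ : z ∈ V' i₀ := by
      have := (Finset.univ.filter (fun i : Fin m => z ∈ V' i)).min'_mem hne
      rw [Finset.mem_filter] at this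
      exact this.2
    refine ⟨i₀, hzi₀, ?_⟩
    intro hmem
    rw [Set.mem_iUnion₂] at hmem
    obtain ⟨j, hj, hzj⟩ := hmem
    rw [Finset.mem_filter] at hj
    have hji : j ∈ Finset.univ.filter (fun i : Fin m => z ∈ V' i) := by
      simp [hzj]
    exact absurd (Finset.min'_le _ _ hji) (not_le.mpr hj.2)
  -- push to X
  set A : Fin m → Set X := fun i => Subtype.val '' W i with hA
  have hAcompact : ∀ i, IsCompact (A i) :=
    fun i => (((hWclopen i).1).isCompact).image continuous_subtype_val
  have hAdisj : Pairwise (Function.onFun Disjoint A) := by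
    intro i j hij
    exact (Set.disjoint_image_iff Subtype.val_injective).mpr (hWdisj hij)
  have hAsmall : ∀ i, ∀ x ∈ A i, ∀ y ∈ A i, dist x y < ε / 2 := by
    rintro i x ⟨a, ha, rfl⟩ y ⟨b, hb, rfl⟩
    have h1 : dist (a : X) ((e.symm i : K) : X) < ε / 4 := hVball _ (hWsub i ha)
    have h2 : dist (b : X) ((e.symm i : K) : X) < ε / 4 := hVball _ (hWsub i hb)
    calc dist (a : X) (b : X) ≤ dist (a : X) ((e.symm i : K) : X)
          + dist ((e.symm i : K) : X) (b : X) := dist_triangle _ _ _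
      _ < ε / 4 + ε / 4 := add_lt_add h1 (dist_comm (b:X) _ ▸ h2)
      _ = ε / 2 := by ring
  have hAcover : K ⊆ ⋃ i, A i := by
    intro x hx
    obtain ⟨i, hi⟩ := hWcover ⟨x, hx⟩
    exact Set.mem_iUnion.mpr ⟨i, ⟨⟨x, hx⟩, hi, rfl⟩⟩
  -- separate by thickenings
  rcases Nat.eq_zero_or_pos m with hm0 | hmpos
  · refine ⟨m, fun i => ∅, by simp, by simp [Pairwise, Function.onFun], by simp, ?_⟩
    intro x hx
    obtain ⟨i, _⟩ := hWcover ⟨x, hx⟩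
    have := i.2
    omega
  · haveI : Nonempty (Fin m × Fin m) := ⟨(⟨0, hmpos⟩, ⟨0, hmpos⟩)⟩
    have hpair : ∀ p : Fin m × Fin m, ∃ r : ℝ, 0 < r ∧ (p.1 ≠ p.2 →
        Disjoint (thickening r (A p.1)) (thickening r (A p.2))) := by
      intro p
      by_cases hp : p.1 ≠ p.2
      · obtain ⟨r, hr, hdisj⟩ := (hAdisj hp).exists_thickenings (hAcompact p.1)
          (hAcompact p.2).isClosed
        exact ⟨r, hr, fun _ => hdisj⟩
      · exact ⟨1, one_pos, fun h => absurd h hp⟩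
    choose r hrpos hrdisj using hpair
    set ρ := min (ε / 8) (Finset.univ.inf' Finset.univ_nonempty r) with hρ
    have hρpos : 0 < ρ := by
      apply lt_min (by positivity)
      rw [Finset.lt_inf'_iff]
      exact fun p _ => hrpos p
    have hρle : ∀ p : Fin m × Fin m, ρ ≤ r p := fun p =>
      le_trans (min_le_right _ _) (Finset.inf'_le _ (Finset.mem_univ p))
    refine ⟨m, fun i => thickening ρ (A i), fun i => isOpen_thickening, ?_, ?_, ?_⟩
    · intro i j hij
      have := hrdisj (i, j) hij
      exact this.mono (thickening_mono (hρle (i, j)) _) (thickening_mono (hρle (i, j)) _)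
    · intro i x hx y hy
      obtain ⟨a, ha, hxa⟩ := mem_thickening_iff.mp hx
      obtain ⟨b, hb, hyb⟩ := mem_thickening_iff.mp hy
      have hab : dist a b < ε / 2 := hAsmall i a ha b hb
      have hρ8 : ρ ≤ ε / 8 := min_le_left _ _
      calc dist x y ≤ dist x a + dist a b + dist b y := dist_triangle4 _ _ _ _
        _ < ρ + (ε / 2) + ρ := by
            have := dist_comm y b ▸ hyb
            exact add_lt_add (add_lt_add hxa hab) this
        _ ≤ ε / 8 + ε / 2 + ε / 8 := by linarith
        _ < ε := by linarith
    · exact hAcover.trans (Set.iUnion_mono fun i => self_subset_thickening hρpos _)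


/-- The `n`-th open set in the Gδ decomposition. -/
def Gset (X : Type*) [MetricSpace X] [CompactSpace X] (n : ℕ) : Set C(X, X) :=
  {f | ∃ (m : ℕ) (U : Fin m → Set X), (∀ i, IsOpen (U i)) ∧ Pairwise (Function.onFun Disjoint U) ∧
    (∀ i, ∀ x ∈ U i, ∀ y ∈ U i, dist x y < 1 / (n + 1)) ∧ ChainRec ⇑f ⊆ ⋃ i, U i}

lemma isOpen_Gset [CompactSpace X] (n : ℕ) : IsOpen (Gset X n) := by
  rw [Metric.isOpen_iff]
  rintro f ⟨m, U, hUopen, hUdisj, hUsmall, hUcov⟩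
  obtain ⟨δ, hδpos, hδ⟩ := usc f (isOpen_iUnion hUopen) hUcov
  exact ⟨δ, hδpos, fun g hg => ⟨m, U, hUopen, hUdisj, hUsmall, hδ g (mem_ball.mp hg)⟩⟩

end Stmt10Aux

open Stmt10Aux in
theorem stmt10 [CompactSpace X] :
    IsGδ {f : C(X, X) | ∀ x ∈ ChainRec (⇑f),
      connectedComponentIn (ChainRec (⇑f)) x = {x}} := by
  have hset : {f : C(X, X) | ∀ x ∈ ChainRec (⇑f),
      connectedComponentIn (ChainRec (⇑f)) x = {x}} = ⋂ n : ℕ, Gset X n := by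
    ext f
    simp only [Set.mem_setOf_eq, Set.mem_iInter]
    constructor
    · intro hf n
      have hclosed : IsClosed (ChainRec ⇑f) := by
        rw [chainRec_eq ⇑f f.continuous]
        exact isClosed_iInter fun k => isClosed_closure
      obtain ⟨m, U, h1, h2, h3, h4⟩ :=
        decomp hclosed.isCompact hf (by positivity : (0:ℝ) < 1 / (n + 1))
      exact ⟨m, U, h1, h2, h3, h4⟩
    · intro hf x hx
      apply Set.eq_singleton_iff_unique_mem.mpr
      refine ⟨mem_connectedComponentIn hx, fun y hy => ?_⟩
      have key : ∀ n : ℕ, dist y x < 1 / (n + 1) := by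
        intro n
        obtain ⟨m, U, hUopen, hUdisj, hUsmall, hUcov⟩ := hf n
        obtain ⟨i, hxi⟩ := Set.mem_iUnion.mp (hUcov hx)
        have hCU : connectedComponentIn (ChainRec ⇑f) x ⊆ U i := by
          apply IsPreconnected.subset_left_of_subset_union (hUopen i)
            (isOpen_iUnion fun j => isOpen_iUnion fun _ => hUopen j)
          · rw [Set.disjoint_iUnion_right]
            intro j
            rw [Set.disjoint_iUnion_right]
            intro hji
            exact hUdisj (Ne.symm hji)
          · intro z hz
            obtain ⟨j, hzj⟩ := Set.mem_iUnion.mp (hUcov (connectedComponentIn_subset _ _ hz))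
            rcases eq_or_ne j i with rfl | hji
            · exact Or.inl hzj
            · exact Or.inr (Set.mem_iUnion.mpr ⟨j, Set.mem_iUnion.mpr ⟨hji, hzj⟩⟩)
          · exact ⟨x, mem_connectedComponentIn hx, hxi⟩
          · exact isPreconnected_connectedComponentIn
        exact hUsmall i y (hCU hy) x (hCU (mem_connectedComponentIn hx))
      have : dist y x ≤ 0 := by
        by_contra hpos
        push_neg at hpos
        obtain ⟨n, hn⟩ := exists_nat_one_div_lt hpos
        exact absurd (key n) (not_lt.mpr hn.le)
      exact dist_le_zero.mp this
  rw [hset]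
  exact IsGδ.iInter_of_isOpen fun n => Stmt10Aux.isOpen_Gset n
end

section
/- Let X be a compact metric space and suppose that for every ε > 0 there is a closed subset Y_ε ⊆ X and a retraction r_ε : X → Y_ε with sup_x d(r_ε(x), x) < ε such that the set { g ∈ C(Y_ε, Y_ε) : dim CR(g) = 0 } is dense in C(Y_ε, Y_ε). Then the set { f ∈ C(X,X) : dim CR(f) = 0 } is dense in C(X,X). -/
open Metric Set

variable {X : Type*} [MetricSpace X]

theorem stmt11 [CompactSpace X]
    (h : ∀ ε > (0:ℝ), ∃ Y : Set X, IsClosed Y ∧ ∃ r : X → X, Continuous r ∧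
      (∀ x, r x ∈ Y) ∧ (∀ x ∈ Y, r x = x) ∧ (∀ x, dist (r x) x < ε) ∧
      -- zero-dimensional chain recurrent sets are dense in C(Y, Y):
      ∀ g : X → X, ContinuousOn g Y → MapsTo g Y Y → ∀ δ > (0:ℝ),
        ∃ g' : X → X, ContinuousOn g' Y ∧ MapsTo g' Y Y ∧
          (∀ x ∈ Y, dist (g x) (g' x) < δ) ∧
          ∀ x ∈ ChainRecIn g' Y, connectedComponentIn (ChainRecIn g' Y) x = {x}) :
    Dense {f : C(X, X) | ∀ x ∈ ChainRec (⇑f),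
      connectedComponentIn (ChainRec (⇑f)) x = {x}} := by
  rw [Metric.dense_iff]
  intro f ε hε
  obtain ⟨η1, hη1, hf_uc⟩ := Metric.uniformContinuous_iff.mp
    (CompactSpace.uniformContinuous_of_continuous f.continuous) (ε/4) (by positivity)
  obtain ⟨Y, hYclosed, r, hr_cont, hrY, hrid, hr_close, hdense⟩ :=
    h (min (ε/4) η1) (lt_min (by positivity) hη1)
  have hg_cont : ContinuousOn (r ∘ f) Y := (hr_cont.comp f.continuous).continuousOn
  have hg_maps : MapsTo (r ∘ f) Y Y := fun x _ => hrY _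
  obtain ⟨g', hg'cont, hg'maps, hg'close, hg'cr⟩ :=
    hdense (r ∘ f) hg_cont hg_maps (ε/4) (by positivity)
  set F : X → X := fun x => g' (r x) with hFdef
  have hFcont : Continuous F := hg'cont.comp_continuous hr_cont hrY
  have hFY : ∀ x, F x ∈ Y := fun x => hg'maps (hrY x)
  have hFeq : ∀ x ∈ Y, F x = g' x := fun x hx => by simp only [hFdef, hrid x hx]
  have hdist : ∀ x, dist (f x) (F x) < ε := by
    intro x
    have t1 : dist (f x) (f (r x)) < ε/4 := by
      apply hf_uc
      rw [dist_comm]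
      exact lt_of_lt_of_le (hr_close x) (min_le_right _ _)
    have t2 : dist (f (r x)) (r (f (r x))) < ε/4 := by
      rw [dist_comm]
      exact lt_of_lt_of_le (hr_close _) (min_le_left _ _)
    have t3 : dist (r (f (r x))) (g' (r x)) < ε/4 := hg'close (r x) (hrY x)
    calc dist (f x) (F x) ≤ dist (f x) (f (r x)) + dist (f (r x)) (r (f (r x)))
          + dist (r (f (r x))) (g' (r x)) := dist_triangle4 _ _ _ _
      _ < ε/4 + ε/4 + ε/4 := by linarith
      _ < ε := by linarith
  -- membership in Y of chain recurrent points
  have hxY' : ∀ x, x ∈ ChainRec F → x ∈ Y := by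
    intro x hx
    by_contra hxY
    have hYne : Y.Nonempty := ⟨r x, hrY x⟩
    have hd : 0 < infDist x Y := (hYclosed.notMem_iff_infDist_pos hYne).mp hxY
    obtain ⟨n, hn, c, hc0, hcn, hcd⟩ := hx (infDist x Y) hd
    have hlt := hcd (n-1) (by omega)
    rw [show n-1+1 = n from by omega, hcn] at hlt
    have hle : infDist x Y ≤ dist (F (c (n-1))) x := by
      rw [dist_comm]; exact infDist_le_dist_of_mem (hFY _)
    exact absurd hlt (not_lt.mpr hle)
  have hset : ChainRec F = ChainRecIn g' Y := by
    ext x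
    constructor
    · intro hx
      have hxY : x ∈ Y := hxY' x hx
      refine ⟨hxY, ?_⟩
      intro δ hδ
      obtain ⟨η, hη, hηF⟩ := Metric.uniformContinuous_iff.mp
        (CompactSpace.uniformContinuous_of_continuous hFcont) (δ/2) (by positivity)
      obtain ⟨n, hn, c, hc0, hcn, hcd⟩ := hx (min (δ/2) η) (lt_min (by positivity) hη)
      refine ⟨n, hn, fun i => if i = 0 ∨ i = n then x else F (c (i-1)), ?_, ?_, ?_, ?_⟩
      · intro i _
        by_cases hi : i = 0 ∨ i = n
        · simp [hi, hxY]
        · simp only [hi, if_false]; exact hFY _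
      · simp
      · simp
      · intro i hi
        have hmem : (if i = 0 ∨ i = n then x else F (c (i-1))) ∈ Y := by
          by_cases hi' : i = 0 ∨ i = n
          · simp [hi', hxY]
          · simp only [hi', if_false]; exact hFY _
        rw [← hFeq _ hmem]
        by_cases hi0 : i = 0
        · subst hi0
          by_cases hn1 : n = 1
          · subst hn1
            have hd1 := hcd 0 hi
            rw [hc0, hcn] at hd1
            norm_num
            calc dist (F x) x < min (δ/2) η := hd1
              _ ≤ δ/2 := min_le_left _ _
              _ < δ := by linarith
          · have h1n : ¬ (1 = 0 ∨ 1 = n) := by omega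
            simp only [show (0:ℕ) = 0 ∨ (0:ℕ) = n from Or.inl rfl, if_true, Nat.zero_add,
              h1n, if_false, Nat.sub_self]
            rw [hc0]
            simpa using hδ
        · have hii : ¬ (i = 0 ∨ i = n) := by omega
          simp only [hii, if_false]
          have hstep : dist (F (F (c (i-1)))) (F (c i)) < δ/2 := by
            apply hηF
            have := hcd (i-1) (by omega)
            rw [show i-1+1 = i from by omega] at this
            exact lt_of_lt_of_le this (min_le_right _ _)
          by_cases hin : i + 1 = n
          · have : (i+1 = 0 ∨ i+1 = n) := Or.inr hin
            simp only [this, if_true]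
            have h2 : dist (F (c i)) (c (i+1)) < δ/2 :=
              lt_of_lt_of_le (hcd i hi) (min_le_left _ _)
            rw [hin, hcn] at h2
            calc dist (F (F (c (i-1)))) x ≤ dist (F (F (c (i-1)))) (F (c i)) + dist (F (c i)) x :=
                dist_triangle _ _ _
              _ < δ/2 + δ/2 := by linarith
              _ = δ := by ring
          · have hni : ¬ (i+1 = 0 ∨ i+1 = n) := by omega
            simp only [hni, if_false, Nat.add_sub_cancel]
            linarith
    · rintro ⟨hxY, hx⟩
      intro δ hδ
      obtain ⟨n, hn, c, hcY, hc0, hcn, hcd⟩ := hx δ hδ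
      exact ⟨n, hn, c, hc0, hcn, fun i hi => by
        rw [hFeq (c i) (hcY i hi.le)]; exact hcd i hi⟩
  refine ⟨⟨F, hFcont⟩, Metric.mem_ball.mpr ?_, ?_⟩
  · rw [dist_comm]
    exact (ContinuousMap.dist_lt_iff hε).mpr hdist
  · intro x hx
    have hc : ChainRec (⇑(⟨F, hFcont⟩ : C(X,X))) = ChainRecIn g' Y := hset
    rw [hc] at hx ⊢
    exact hg'cr x hx
end

section
/- Let X be a compact metric space and μ a finite Borel measure on X. Then the set { f ∈ C(X,X) : μ(CR(f)) = 0 } is a Gδ subset of C(X,X). -/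
open Metric Set

variable {X : Type*} [MetricSpace X]

/-- Points admitting a periodic `ε`-chain. -/
def CRe (f : X → X) (ε : ℝ) : Set X :=
  {x | ∃ n : ℕ, 0 < n ∧ ∃ c : ℕ → X, c 0 = x ∧ c n = x ∧
    ∀ i < n, dist (f (c i)) (c (i+1)) < ε}

lemma CRe_mono (f : X → X) {ε ε' : ℝ} (h : ε ≤ ε') : CRe f ε ⊆ CRe f ε' := by
  rintro x ⟨n, hn, c, h0, hc, hj⟩
  exact ⟨n, hn, c, h0, hc, fun i hi => lt_of_lt_of_le (hj i hi) h⟩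

lemma chainRec_subset_CRe (f : X → X) {ε : ℝ} (hε : 0 < ε) : ChainRec f ⊆ CRe f ε :=
  fun x hx => hx ε hε

lemma CRe_of_close {f g : X → X} {δ ε : ℝ} (h : ∀ x, dist (g x) (f x) < δ) :
    CRe g ε ⊆ CRe f (ε + δ) := by
  rintro x ⟨n, hn, c, h0, hc, hj⟩
  refine ⟨n, hn, c, h0, hc, fun i hi => ?_⟩
  calc dist (f (c i)) (c (i+1)) ≤ dist (f (c i)) (g (c i)) + dist (g (c i)) (c (i+1)) :=
        dist_triangle _ _ _
    _ < δ + ε := by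
        have := h (c i)
        rw [dist_comm] at this
        exact add_lt_add this (hj i hi)
    _ = ε + δ := by ring

lemma closure_CRe_subset {f : X → X} (hf : Continuous f) {ε ε' : ℝ} (h : ε < ε') :
    closure (CRe f ε) ⊆ CRe f ε' := by
  intro x hx
  set d := (ε' - ε) / 2 with hd
  have hd0 : 0 < d := by simp [hd]; linarith
  obtain ⟨δ, hδ0, hδ⟩ := Metric.continuousAt_iff.1 hf.continuousAt d hd0
  obtain ⟨y, hyCR, hyx⟩ := Metric.mem_closure_iff.1 hx (min δ d) (lt_min hδ0 hd0)
  rw [dist_comm] at hyx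
  have hyx_d : dist y x < d := lt_of_lt_of_le hyx (min_le_right _ _)
  have hfy : dist (f x) (f y) < d := by
    rw [dist_comm]; exact hδ (lt_of_lt_of_le hyx (min_le_left _ _))
  obtain ⟨n, hn, c, h0, hc, hj⟩ := hyCR
  set C : ℕ → X := fun i => if i = 0 then x else if i = n then x else c i with hCdef
  have hC0 : C 0 = x := if_pos rfl
  have hCn : C n = x := by simp [hCdef, hn.ne']
  have hCmid : ∀ i, i ≠ 0 → i ≠ n → C i = c i := fun i h1 h2 => by
    simp [hCdef, h1, h2]
  refine ⟨n, hn, C, hC0, hCn, fun i hi => ?_⟩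
  by_cases hi0 : i = 0
  · subst hi0
    rw [hC0]
    by_cases h1n : (1 : ℕ) = n
    · have hC1 : C 1 = x := by rw [show C 1 = if 1 = n then x else c 1 from if_neg one_ne_zero, if_pos h1n]
      rw [zero_add, hC1]
      have j := hj 0 hi
      rw [h0] at j
      have hc1 : c (0 + 1) = y := by rw [zero_add, h1n, hc]
      rw [hc1] at j
      calc dist (f x) x ≤ dist (f x) (f y) + dist (f y) y + dist y x := by
            have t1 := dist_triangle (f x) (f y) x
            have t2 := dist_triangle (f y) y x
            linarith
        _ < d + ε + d := add_lt_add (add_lt_add hfy j) hyx_d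
        _ = ε' := by rw [hd]; ring
    · have hC1 : C 1 = c 1 := hCmid 1 one_ne_zero h1n
      rw [zero_add, hC1]
      have j := hj 0 hi
      rw [h0] at j
      calc dist (f x) (c 1) ≤ dist (f x) (f y) + dist (f y) (c (0 + 1)) := by
            rw [zero_add]; exact dist_triangle _ _ _
        _ < d + ε := add_lt_add hfy j
        _ ≤ ε' := by rw [hd]; linarith
  · have hin : i ≠ n := fun he => absurd hi (by simp [he])
    rw [hCmid i hi0 hin]
    by_cases hi1 : i + 1 = n
    · rw [show C (i+1) = x from hi1 ▸ hCn]
      have j := hj i hi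
      rw [hi1, hc] at j
      calc dist (f (c i)) x ≤ dist (f (c i)) y + dist y x := dist_triangle _ _ _
        _ < ε + d := add_lt_add j hyx_d
        _ ≤ ε' := by rw [hd]; linarith
    · rw [hCmid (i+1) (Nat.succ_ne_zero i) hi1]
      exact lt_of_lt_of_le (hj i hi) h.le

lemma iInter_closure_CRe {f : X → X} (hf : Continuous f) :
    (⋂ n : ℕ, closure (CRe f (1 / (n + 1)))) ⊆ ChainRec f := by
  intro x hx ε hε
  obtain ⟨n, hn⟩ := exists_nat_one_div_lt hε
  exact closure_CRe_subset hf hn (mem_iInter.1 hx n)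

/-- Upper semicontinuity of the chain recurrent set. -/
lemma chainRec_usc [CompactSpace X] (f : C(X, X)) {U : Set X} (hU : IsOpen U)
    (hCR : ChainRec (⇑f) ⊆ U) :
    ∃ δ > (0:ℝ), ∀ g : C(X, X), dist g f < δ → ChainRec (⇑g) ⊆ U := by
  set Z : ℕ → Set X := fun n => closure (CRe (⇑f) (1 / (n + 1))) ∩ Uᶜ with hZ
  have hZclosed : ∀ n, IsClosed (Z n) := fun n =>
    isClosed_closure.inter hU.isClosed_compl
  have hZempty : (univ : Set X) ∩ ⋂ n, Z n = ∅ := by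
    rw [univ_inter, eq_empty_iff_forall_notMem]
    intro x hx
    simp only [hZ, mem_iInter, mem_inter_iff] at hx
    have hx1 : x ∈ ⋂ n : ℕ, closure (CRe (⇑f) (1 / (n + 1))) :=
      mem_iInter.2 fun n => (hx n).1
    exact (hx 0).2 (hCR (iInter_closure_CRe f.continuous hx1))
  obtain ⟨t, ht⟩ := isCompact_univ.elim_finite_subfamily_closed Z hZclosed
    (by rw [hZempty])
  set N := t.sup id with hN
  have hZanti : ∀ m k : ℕ, m ≤ k → Z k ⊆ Z m := by
    intro m k hmk
    apply inter_subset_inter_left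
    apply closure_mono
    apply CRe_mono
    have hle : (m : ℝ) + 1 ≤ (k : ℝ) + 1 := by
      have := (Nat.cast_le (α := ℝ)).2 hmk
      linarith
    exact one_div_le_one_div_of_le (by positivity) hle
  have hZN : Z N = ∅ := by
    rw [eq_empty_iff_forall_notMem]
    intro x hx
    have : x ∈ (univ : Set X) ∩ ⋂ i ∈ t, Z i := by
      refine ⟨mem_univ x, mem_iInter₂.2 fun i hi => ?_⟩
      exact hZanti i N (Finset.le_sup (f := id) hi) hx
    rw [ht] at this
    exact this
  -- CRe f (1/(N+1)) ⊆ U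
  have hCReU : CRe (⇑f) (1 / (N + 1)) ⊆ U := by
    intro x hx
    by_contra hxU
    have : x ∈ Z N := ⟨subset_closure hx, hxU⟩
    rw [hZN] at this
    exact this
  refine ⟨1 / (2 * (N + 1)), by positivity, fun g hg => ?_⟩
  have hclose : ∀ x, dist (g x) (f x) < 1 / (2 * (N + 1)) := fun x =>
    lt_of_le_of_lt (ContinuousMap.dist_apply_le_dist x) hg
  have h1 : ChainRec (⇑g) ⊆ CRe (⇑g) (1 / (2 * (N + 1))) :=
    chainRec_subset_CRe _ (by positivity)
  have h2 : CRe (⇑g) (1 / (2 * (N + 1))) ⊆ CRe (⇑f) (1 / (2 * (N + 1)) + 1 / (2 * (N + 1))) :=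
    CRe_of_close hclose
  have h3 : (1 / (2 * ((N:ℝ) + 1)) + 1 / (2 * (N + 1))) ≤ 1 / (N + 1) := by
    have hne : (0:ℝ) < (N : ℝ) + 1 := by positivity
    rw [← add_div, div_le_div_iff₀ (by positivity) hne]
    nlinarith
  exact (h1.trans (h2.trans (CRe_mono _ h3))).trans hCReU

theorem stmt12 [CompactSpace X] [MeasurableSpace X] [BorelSpace X] (μ : MeasureTheory.Measure X)
    [MeasureTheory.IsFiniteMeasure μ] :
    IsGδ {f : C(X, X) | μ (ChainRec (⇑f)) = 0} := by
  have heq : {f : C(X, X) | μ (ChainRec (⇑f)) = 0}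
      = ⋂ n : ℕ, {f : C(X, X) | μ (ChainRec (⇑f)) < ((n : ENNReal))⁻¹} := by
    ext f
    simp only [mem_setOf_eq, mem_iInter]
    constructor
    · intro h n
      rw [h]
      exact ENNReal.inv_pos.2 (ENNReal.natCast_ne_top n)
    · intro h
      by_contra hne
      obtain ⟨n, hn⟩ := ENNReal.exists_inv_nat_lt hne
      exact absurd (h n) (not_lt.2 hn.le)
  rw [heq]
  apply IsGδ.iInter_of_isOpen
  intro n
  rw [isOpen_iff_forall_mem_open]
  intro f hf
  simp only [mem_setOf_eq] at hf
  obtain ⟨U, hUsub, hUopen, hUμ⟩ := Set.exists_isOpen_lt_of_lt (ChainRec (⇑f)) _ hf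
  obtain ⟨δ, hδ0, hδ⟩ := chainRec_usc f hUopen hUsub
  refine ⟨ball f δ, fun g hg => ?_, isOpen_ball, mem_ball_self hδ0⟩
  simp only [mem_setOf_eq]
  exact lt_of_le_of_lt (MeasureTheory.measure_mono (hδ g (mem_ball.1 hg))) hUμ
end

section
/- Let X and Y be compact metric spaces. The set C_0(X,Y) of continuous maps f : X → Y all of whose fibers f^{-1}(y) are zero-dimensional is a Gδ subset of the space C(X,Y) with the uniform metric. -/
open Metric Set

open TopologicalSpace Filter in
/-- Diameter bound via Hausdorff distance, for compact nonempty sets. -/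
private lemma stmt13_diam_le_aux {X : Type*} [MetricSpace X] {s t : Set X}
    (hs : IsCompact s) (ht : IsCompact t) (hsne : s.Nonempty) (htne : t.Nonempty) :
    diam s ≤ diam t + 2 * hausdorffDist s t := by
  have hfin : EMetric.hausdorffEdist s t ≠ ⊤ :=
    hausdorffEdist_ne_top_of_nonempty_of_bounded hsne htne hs.isBounded ht.isBounded
  apply diam_le_of_forall_dist_le
  · have := hausdorffDist_nonneg (s := s) (t := t)
    positivity
  · intro x hx y hy
    obtain ⟨x', hx', hxd⟩ := ht.exists_infDist_eq_dist htne x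
    obtain ⟨y', hy', hyd⟩ := ht.exists_infDist_eq_dist htne y
    have h1 : dist x x' ≤ hausdorffDist s t := hxd ▸ infDist_le_hausdorffDist_of_mem hx hfin
    have h2 : dist y y' ≤ hausdorffDist s t := hyd ▸ infDist_le_hausdorffDist_of_mem hy hfin
    have h3 : dist x' y' ≤ diam t := dist_le_diam_of_mem ht.isBounded hx' hy'
    calc dist x y ≤ dist x x' + dist x' y' + dist y' y := dist_triangle4 _ _ _ _
      _ ≤ hausdorffDist s t + diam t + dist y y' := by rw [dist_comm y' y]; gcongr
      _ ≤ hausdorffDist s t + diam t + hausdorffDist s t := by gcongr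
      _ = diam t + 2 * hausdorffDist s t := by ring

open TopologicalSpace Filter in
/-- A Hausdorff-metric limit of preconnected compact sets is preconnected. -/
private lemma stmt13_isPreconnected_limit {X : Type*} [MetricSpace X]
    {K : ℕ → NonemptyCompacts X} {L : NonemptyCompacts X}
    (hconn : ∀ j, IsPreconnected (K j : Set X))
    (htend : Tendsto K atTop (nhds L)) : IsPreconnected (L : Set X) := by
  rw [IsPreconnected] at *
  intro U V hU hV hcover ⟨a, haL, haU⟩ ⟨b, hbL, hbV⟩
  by_contra hempty
  rw [not_nonempty_iff_eq_empty] at hempty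
  have hdisj : Disjoint ((L : Set X) ∩ U) ((L : Set X) ∩ V) := by
    rw [Set.disjoint_iff_inter_eq_empty]
    rw [← hempty]; ext z; simp; tauto
  have hcU : IsCompact ((L : Set X) ∩ U) := by
    have : (L : Set X) ∩ U = (L : Set X) \ V := by
      ext z
      simp only [mem_inter_iff, mem_diff]
      constructor
      · rintro ⟨hz, hzU⟩
        refine ⟨hz, fun hzV => ?_⟩
        have : z ∈ (L : Set X) ∩ (U ∩ V) := ⟨hz, hzU, hzV⟩
        rw [hempty] at this; exact this
      · rintro ⟨hz, hzV⟩
        rcases hcover hz with h | h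
        · exact ⟨hz, h⟩
        · exact absurd h hzV
    rw [this]
    exact L.isCompact.diff hV
  have hcV : IsCompact ((L : Set X) ∩ V) := by
    have : (L : Set X) ∩ V = (L : Set X) \ U := by
      ext z
      simp only [mem_inter_iff, mem_diff]
      constructor
      · rintro ⟨hz, hzV⟩
        refine ⟨hz, fun hzU => ?_⟩
        have : z ∈ (L : Set X) ∩ (U ∩ V) := ⟨hz, hzU, hzV⟩
        rw [hempty] at this; exact this
      · rintro ⟨hz, hzU⟩
        rcases hcover hz with h | h
        · exact absurd h hzU
        · exact ⟨hz, h⟩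
    rw [this]
    exact L.isCompact.diff hU
  obtain ⟨δ, hδ, hdisjth⟩ := hdisj.exists_thickenings hcU hcV.isClosed
  have hd0 : Tendsto (fun j => dist (K j) L) atTop (nhds 0) :=
    (tendsto_iff_dist_tendsto_zero).1 htend
  obtain ⟨j, hj⟩ := (hd0.eventually (gt_mem_nhds hδ)).exists
  have hjd : hausdorffDist (K j : Set X) (L : Set X) < δ := hj
  have hfin : EMetric.hausdorffEdist (K j : Set X) (L : Set X) ≠ ⊤ :=
    hausdorffEdist_ne_top_of_nonempty_of_bounded (K j).nonempty L.nonempty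
      (K j).isCompact.isBounded L.isCompact.isBounded
  have hfin' : EMetric.hausdorffEdist (L : Set X) (K j : Set X) ≠ ⊤ := by
    rw [EMetric.hausdorffEdist] at hfin ⊢
    rwa [hausdorffEDist_comm] at hfin
  have hKcover : (K j : Set X) ⊆
      thickening δ ((L : Set X) ∩ U) ∪ thickening δ ((L : Set X) ∩ V) := by
    intro x hx
    obtain ⟨z, hz, hdz⟩ := exists_dist_lt_of_hausdorffDist_lt hx hjd hfin
    rcases hcover hz with h1 | h
    · exact Or.inl (mem_thickening_iff.2 ⟨z, ⟨hz, h1⟩, hdz⟩)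
    · exact Or.inr (mem_thickening_iff.2 ⟨z, ⟨hz, h⟩, hdz⟩)
  have hmU : ((K j : Set X) ∩ thickening δ ((L : Set X) ∩ U)).Nonempty := by
    obtain ⟨x, hx, hdx⟩ := exists_dist_lt_of_hausdorffDist_lt' (y := a) haL hjd hfin
    exact ⟨x, hx, mem_thickening_iff.2 ⟨a, ⟨haL, haU⟩, hdx⟩⟩
  have hmV : ((K j : Set X) ∩ thickening δ ((L : Set X) ∩ V)).Nonempty := by
    obtain ⟨x, hx, hdx⟩ := exists_dist_lt_of_hausdorffDist_lt' (y := b) hbL hjd hfin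
    exact ⟨x, hx, mem_thickening_iff.2 ⟨b, ⟨hbL, hbV⟩, hdx⟩⟩
  obtain ⟨z, _, hz1, hz2⟩ := hconn j _ _ isOpen_thickening isOpen_thickening hKcover hmU hmV
  exact hdisjth.ne_of_mem hz1 hz2 rfl

open TopologicalSpace Filter in
/-- The set of maps all of whose fiber-subcontinua have diameter `< ε` is open. -/
private lemma stmt13_open_aux {X Y : Type*} [MetricSpace X] [CompactSpace X]
    [MetricSpace Y] [CompactSpace Y] {ε : ℝ} (hε : 0 < ε) :
    IsOpen {f : C(X, Y) | ∀ (y : Y) (C : Set X),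
      C ⊆ ⇑f ⁻¹' {y} → IsPreconnected C → diam C < ε} := by
  rw [Metric.isOpen_iff]
  intro f hf
  by_contra hcon
  push_neg at hcon
  have hcon' : ∀ j : ℕ, ∃ g : C(X, Y), dist g f < 1 / (j + 1) ∧
      ∃ y C, C ⊆ ⇑g ⁻¹' {y} ∧ IsPreconnected C ∧ ε ≤ diam C := by
    intro j
    obtain ⟨g, hgball, hgn⟩ := Set.not_subset.1 (hcon (1 / (j + 1)) (by positivity))
    refine ⟨g, mem_ball.1 hgball, ?_⟩
    simp only [mem_setOf_eq, not_forall, not_lt] at hgn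
    obtain ⟨y, C, hC, hpc, hd⟩ := hgn
    exact ⟨y, C, hC, hpc, hd⟩
  choose g hg y C hC hCpc hCd using hcon'
  have hCne : ∀ j, (C j).Nonempty := by
    intro j
    rcases (C j).eq_empty_or_nonempty with h | h
    · exfalso
      have := hCd j
      rw [h, diam_empty] at this
      linarith
    · exact h
  let K : ℕ → NonemptyCompacts X := fun j =>
    ⟨⟨closure (C j), isClosed_closure.isCompact⟩, (hCne j).closure⟩
  obtain ⟨L, -, φ, hφ, hLim⟩ := isCompact_univ.tendsto_subseq (x := K) (fun j => mem_univ _)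
  have hdist0 : Tendsto (fun j => dist (K (φ j)) L) atTop (nhds 0) :=
    tendsto_iff_dist_tendsto_zero.1 hLim
  have hKconn : ∀ j, IsPreconnected (K j : Set X) := fun j => (hCpc j).closure
  have hLconn : IsPreconnected (L : Set X) :=
    stmt13_isPreconnected_limit (fun j => hKconn (φ j)) hLim
  have hKdiam : ∀ j, ε ≤ diam (K j : Set X) := fun j => by
    have : (K j : Set X) = closure (C j) := rfl
    rw [this, diam_closure]
    exact hCd j
  have hLdiam : ε ≤ diam (L : Set X) := by
    have hle : ∀ j, ε ≤ diam (L : Set X) + 2 * dist (K (φ j)) L := fun j =>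
      (hKdiam (φ j)).trans (stmt13_diam_le_aux (K (φ j)).isCompact L.isCompact
        (K (φ j)).nonempty L.nonempty)
    have hlim : Tendsto (fun j => diam (L : Set X) + 2 * dist (K (φ j)) L) atTop
        (nhds (diam (L : Set X) + 2 * 0)) :=
      tendsto_const_nhds.add (tendsto_const_nhds.mul hdist0)
    have := ge_of_tendsto' hlim hle
    linarith
  obtain ⟨x₀, hx₀⟩ := L.nonempty
  have hKfib : ∀ j, (K j : Set X) ⊆ ⇑(g j) ⁻¹' {y j} := fun j =>
    closure_minimal (hC j) (isClosed_singleton.preimage (g j).continuous)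
  have hgf0 : Tendsto (fun j => dist f (g (φ j))) atTop (nhds 0) := by
    apply squeeze_zero (fun _ => dist_nonneg) (fun j => ?_)
      tendsto_one_div_add_atTop_nhds_zero_nat
    rw [dist_comm]
    calc dist (g (φ j)) f ≤ 1 / (φ j + 1) := (hg (φ j)).le
      _ ≤ 1 / (j + 1) := by
        apply one_div_le_one_div_of_le (by positivity)
        have : j ≤ φ j := hφ.le_apply
        linarith [(Nat.cast_le (α := ℝ)).2 this]
  have hchoice : ∀ z ∈ (L : Set X), ∀ j : ℕ,
      ∃ w ∈ (K (φ j) : Set X), dist w z < dist (K (φ j)) L + 1 / (j + 1) := by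
    intro z hz j
    have hfin : EMetric.hausdorffEdist (K (φ j) : Set X) (L : Set X) ≠ ⊤ :=
      hausdorffEdist_ne_top_of_nonempty_of_bounded (K (φ j)).nonempty L.nonempty
        (K (φ j)).isCompact.isBounded L.isCompact.isBounded
    refine exists_dist_lt_of_hausdorffDist_lt' hz ?_ hfin
    have : hausdorffDist (K (φ j) : Set X) (L : Set X) = dist (K (φ j)) L :=
      (NonemptyCompacts.dist_eq).symm
    rw [this]
    have : (0:ℝ) < 1 / (j + 1) := by positivity
    linarith
  have happrox : ∀ z ∈ (L : Set X), ∀ u : ℕ → X, (∀ j, u j ∈ (K (φ j) : Set X)) →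
      (∀ j, dist (u j) z < dist (K (φ j)) L + 1 / (j + 1)) →
      Tendsto (fun j => dist (f (u j)) (f z)) atTop (nhds 0) := by
    intro z hz u hu hud
    have hut : Tendsto u atTop (nhds z) := by
      rw [tendsto_iff_dist_tendsto_zero]
      exact squeeze_zero (fun _ => dist_nonneg) (fun j => (hud j).le)
        (by simpa using hdist0.add tendsto_one_div_add_atTop_nhds_zero_nat)
    exact tendsto_iff_dist_tendsto_zero.1 ((f.continuous.tendsto z).comp hut)
  have hconst : ∀ x ∈ (L : Set X), f x = f x₀ := by
    intro x hx
    choose u hu hud using hchoice x hx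
    choose v hv hvd using hchoice x₀ hx₀
    have hu0 := happrox x hx u hu hud
    have hv0 := happrox x₀ hx₀ v hv hvd
    have hb : ∀ j, dist (f x) (f x₀) ≤ dist (f (u j)) (f x) + dist f (g (φ j)) +
        dist f (g (φ j)) + dist (f (v j)) (f x₀) := by
      intro j
      have h1 : g (φ j) (u j) = y (φ j) := hKfib (φ j) (hu j)
      have h2 : g (φ j) (v j) = y (φ j) := hKfib (φ j) (hv j)
      have hmid : dist (f (u j)) (f (v j)) ≤ dist f (g (φ j)) + dist f (g (φ j)) := by
        calc dist (f (u j)) (f (v j)) ≤ dist (f (u j)) (g (φ j) (u j)) +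
            dist (g (φ j) (u j)) (g (φ j) (v j)) + dist (g (φ j) (v j)) (f (v j)) :=
              dist_triangle4 _ _ _ _
          _ = dist (f (u j)) (g (φ j) (u j)) + dist (g (φ j) (v j)) (f (v j)) := by
              rw [h1, h2]; simp
          _ ≤ dist f (g (φ j)) + dist f (g (φ j)) := by
              rw [dist_comm (g (φ j) (v j))]
              exact add_le_add (ContinuousMap.dist_apply_le_dist _)
                (ContinuousMap.dist_apply_le_dist _)
      calc dist (f x) (f x₀) ≤ dist (f x) (f (u j)) + dist (f (u j)) (f (v j)) +
          dist (f (v j)) (f x₀) := dist_triangle4 _ _ _ _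
        _ ≤ dist (f x) (f (u j)) + (dist f (g (φ j)) + dist f (g (φ j))) +
            dist (f (v j)) (f x₀) := by gcongr
        _ = dist (f (u j)) (f x) + dist f (g (φ j)) + dist f (g (φ j)) +
            dist (f (v j)) (f x₀) := by rw [dist_comm (f x)]; ring
    have hlim0 : Tendsto (fun j => dist (f (u j)) (f x) + dist f (g (φ j)) +
        dist f (g (φ j)) + dist (f (v j)) (f x₀)) atTop (nhds (0 + 0 + 0 + 0)) :=
      ((hu0.add hgf0).add hgf0).add hv0
    have : dist (f x) (f x₀) ≤ 0 + 0 + 0 + 0 := ge_of_tendsto' hlim0 hb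
    have : dist (f x) (f x₀) ≤ 0 := by linarith
    exact dist_le_zero.1 this
  have hLsub : (L : Set X) ⊆ ⇑f ⁻¹' {f x₀} := fun x hx => by
    simp [hconst x hx]
  have := hf (f x₀) (L : Set X) hLsub hLconn
  linarith

theorem stmt13 {X Y : Type*} [MetricSpace X] [CompactSpace X]
    [MetricSpace Y] [CompactSpace Y] :
    IsGδ {f : C(X, Y) | ∀ y : Y, ∀ x ∈ (⇑f) ⁻¹' {y},
      connectedComponentIn ((⇑f) ⁻¹' {y}) x = {x}} := by
  have key : {f : C(X, Y) | ∀ y : Y, ∀ x ∈ (⇑f) ⁻¹' {y},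
      connectedComponentIn ((⇑f) ⁻¹' {y}) x = {x}} =
      ⋂ n : ℕ, {f : C(X, Y) | ∀ (y : Y) (C : Set X),
        C ⊆ ⇑f ⁻¹' {y} → IsPreconnected C → Metric.diam C < 1 / (n + 1)} := by
    ext f
    simp only [mem_setOf_eq, mem_iInter]
    constructor
    · intro h n y C hCsub hpc
      rcases C.eq_empty_or_nonempty with rfl | ⟨x, hx⟩
      · rw [Metric.diam_empty]; positivity
      · have hsub : C ⊆ connectedComponentIn (⇑f ⁻¹' {y}) x :=
          hpc.subset_connectedComponentIn hx hCsub
        rw [h y x (hCsub hx)] at hsub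
        have hss : C.Subsingleton := subsingleton_of_subset_singleton hsub
        rw [Metric.diam_subsingleton hss]
        positivity
    · intro h y x hx
      have hfib : IsCompact ((⇑f) ⁻¹' {y}) :=
        (isClosed_singleton.preimage f.continuous).isCompact
      have hxin : x ∈ connectedComponentIn ((⇑f) ⁻¹' {y}) x := mem_connectedComponentIn hx
      have hsub : connectedComponentIn ((⇑f) ⁻¹' {y}) x ⊆ (⇑f) ⁻¹' {y} :=
        connectedComponentIn_subset _ _
      have hb : Bornology.IsBounded (connectedComponentIn ((⇑f) ⁻¹' {y}) x) :=
        hfib.isBounded.subset hsub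
      have hd : Metric.diam (connectedComponentIn ((⇑f) ⁻¹' {y}) x) ≤ 0 :=
        ge_of_tendsto' tendsto_one_div_add_atTop_nhds_zero_nat
          (fun n => (h n y _ hsub isPreconnected_connectedComponentIn).le)
      have hss : (connectedComponentIn ((⇑f) ⁻¹' {y}) x).Subsingleton := by
        intro a ha b hb'
        have := Metric.dist_le_diam_of_mem hb ha hb'
        have : dist a b ≤ 0 := this.trans hd
        exact dist_le_zero.1 this
      exact hss.eq_singleton_of_mem hxin
  rw [key]
  exact IsGδ.iInter fun n => (stmt13_open_aux (by positivity)).isGδ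
end

section
/- Let X be a compact metric space. For each n ≥ 1, the set A_n = { f ∈ C(X,X) : every connected component of every fiber f^{-1}(y) has diameter < 1/n } is open in C(X,X). -/
open Metric Set

namespace Stmt14Aux

variable {X : Type*} [MetricSpace X]

/-- One ε-step landing in `K`. -/
def Step (ε : ℝ) (K : Set X) (a b : X) : Prop := b ∈ K ∧ dist a b ≤ ε

/-- The ε-chain component of `x` inside `K`. -/
def Reach (ε : ℝ) (K : Set X) (x : X) : Set X := {z | Relation.ReflTransGen (Step ε K) x z}

lemma self_mem_reach (ε : ℝ) (K : Set X) (x : X) : x ∈ Reach ε K x :=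
  Relation.ReflTransGen.refl

lemma reach_subset' {ε : ℝ} {K : Set X} {x : X} : Reach ε K x ⊆ K ∪ {x} := by
  intro z hz
  induction hz with
  | refl => exact Or.inr rfl
  | tail _ h _ => exact Or.inl h.1

lemma reach_subset {ε : ℝ} {K : Set X} {x : X} (hx : x ∈ K) : Reach ε K x ⊆ K := by
  intro z hz
  rcases reach_subset' hz with h | h
  · exact h
  · exact h ▸ hx

lemma reach_mono {ε ε' : ℝ} {K K' : Set X} (hε : ε ≤ ε') (hK : K ⊆ K') (x : X) :
    Reach ε K x ⊆ Reach ε' K' x := fun _ hz =>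
  Relation.ReflTransGen.mono (fun _ _ hab => ⟨hK hab.1, hab.2.trans hε⟩) _ _ hz

lemma reach_head {ε : ℝ} {K : Set X} {x x' : X} (hx' : x' ∈ K) (hd : dist x x' ≤ ε) :
    Reach ε K x' ⊆ Reach ε K x := fun _ hz =>
  Relation.ReflTransGen.head ⟨hx', hd⟩ hz

lemma reach_trans {ε : ℝ} {K : Set X} {x z : X} (hz : z ∈ Reach ε K x) :
    Reach ε K z ⊆ Reach ε K x := fun _ hw => hz.trans hw

lemma isClosed_reach {ε : ℝ} (hε : 0 < ε) {K : Set X} (hK : IsClosed K) (x : X) :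
    IsClosed (Reach ε K x) := by
  apply isClosed_of_closure_subset
  intro z hz
  have hzK : z ∈ K ∪ {x} := by
    have h1 : closure (Reach ε K x) ⊆ closure (K ∪ {x}) := closure_mono reach_subset'
    have h2 : closure (K ∪ {x}) = K ∪ {x} := (hK.union isClosed_singleton).closure_eq
    exact h2 ▸ h1 hz
  rcases Metric.mem_closure_iff.1 hz ε hε with ⟨z', hz', hd⟩
  rcases hzK with hzK | hzK
  · exact Relation.ReflTransGen.tail hz' ⟨hzK, by rw [dist_comm]; exact hd.le⟩
  · rw [mem_singleton_iff] at hzK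
    exact hzK ▸ self_mem_reach ε K x

/-- A preconnected set is ε-chain connected for every positive ε. -/
lemma preconnected_subset_reach {ε : ℝ} (hε : 0 < ε) {S : Set X} (hS : IsPreconnected S)
    {x : X} (hx : x ∈ S) : S ⊆ Reach ε S x := by
  by_contra h
  rw [not_subset] at h
  obtain ⟨z₀, hz₀S, hz₀⟩ := h
  have key := hS (⋃ w ∈ Reach ε S x ∩ S, ball w ε) (⋃ w ∈ S \ Reach ε S x, ball w ε)
    (isOpen_biUnion fun _ _ => isOpen_ball) (isOpen_biUnion fun _ _ => isOpen_ball)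
    (fun z hzS => by
      by_cases hzR : z ∈ Reach ε S x
      · exact Or.inl (mem_iUnion₂.2 ⟨z, ⟨hzR, hzS⟩, mem_ball_self hε⟩)
      · exact Or.inr (mem_iUnion₂.2 ⟨z, ⟨hzS, hzR⟩, mem_ball_self hε⟩))
    ⟨x, hx, mem_iUnion₂.2 ⟨x, ⟨self_mem_reach ε S x, hx⟩, mem_ball_self hε⟩⟩
    ⟨z₀, hz₀S, mem_iUnion₂.2 ⟨z₀, ⟨hz₀S, hz₀⟩, mem_ball_self hε⟩⟩
  obtain ⟨p, hpS, hpU, hpV⟩ := key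
  obtain ⟨w, ⟨hwR, _⟩, hpw⟩ := mem_iUnion₂.1 hpU
  obtain ⟨w', ⟨hw'S, hw'R⟩, hpw'⟩ := mem_iUnion₂.1 hpV
  have hpR : p ∈ Reach ε S x :=
    Relation.ReflTransGen.tail hwR ⟨hpS, by rw [dist_comm]; exact (mem_ball.1 hpw).le⟩
  exact hw'R (Relation.ReflTransGen.tail hpR ⟨hw'S, (mem_ball.1 hpw').le⟩)

/-- From a directed family of compacts whose intersection lies in an open set,
one member lies in the open set. -/
lemma exists_subset_of_iInter_subset {ι : Type*} [Nonempty ι] (Z : ι → Set X)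
    (hdir : Directed (· ⊇ ·) Z) (hcomp : ∀ i, IsCompact (Z i)) (hcl : ∀ i, IsClosed (Z i))
    {U : Set X} (hU : IsOpen U) (h : ⋂ i, Z i ⊆ U) : ∃ i, Z i ⊆ U := by
  by_contra hc
  push_neg at hc
  have hne : ∀ i, (Z i \ U).Nonempty := by
    intro i
    obtain ⟨a, ha, haU⟩ := not_subset.1 (hc i)
    exact ⟨a, ha, haU⟩
  have hmain := IsCompact.nonempty_iInter_of_directed_nonempty_isCompact_isClosed
    (fun i => Z i \ U)
    (fun i j => by obtain ⟨k, hk1, hk2⟩ := hdir i j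
                   exact ⟨k, diff_subset_diff_left hk1, diff_subset_diff_left hk2⟩)
    hne (fun i => (hcomp i).diff hU) (fun i => (hcl i).sdiff hU)
  obtain ⟨z, hz⟩ := hmain
  rw [mem_iInter] at hz
  exact (hz (Classical.arbitrary ι)).2 (h (mem_iInter.2 fun i => (hz i).1))

/-- Diameter extraction: if the intersection of a directed compact family has
small diameter, some member already has small diameter. -/
lemma exists_small_diam {ι : Type*} [Nonempty ι] (Z : ι → Set X)
    (hdir : Directed (· ⊇ ·) Z) (hcomp : ∀ i, IsCompact (Z i)) (hcl : ∀ i, IsClosed (Z i))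
    {r : ℝ} (h : Metric.diam (⋂ i, Z i) < r) : ∃ i, Metric.diam (Z i) < r := by
  set C := ⋂ i, Z i with hC
  have hCb : Bornology.IsBounded C :=
    ((hcomp (Classical.arbitrary ι)).isBounded).subset (iInter_subset _ _)
  set r' : ℝ := (Metric.diam C + r) / 2 with hr'def
  have hdiam0 : (0:ℝ) ≤ Metric.diam C := Metric.diam_nonneg
  have hr'0 : 0 ≤ r' := by rw [hr'def]; linarith
  have hCr' : Metric.diam C < r' := by rw [hr'def]; linarith
  have hr'r : r' < r := by rw [hr'def]; linarith
  set D : ι → Set (X × X) := fun i => (Z i ×ˢ Z i) ∩ {p : X × X | r' ≤ dist p.1 p.2} with hD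
  have hDcl : ∀ i, IsClosed (D i) :=
    fun i => ((hcl i).prod (hcl i)).inter (isClosed_le continuous_const continuous_dist)
  have hDcomp : ∀ i, IsCompact (D i) := fun i =>
    ((hcomp i).prod (hcomp i)).inter_right (isClosed_le continuous_const continuous_dist)
  have hDdir : Directed (· ⊇ ·) D := by
    intro i j
    obtain ⟨k, hk1, hk2⟩ := hdir i j
    exact ⟨k, inter_subset_inter_left _ (prod_mono hk1 hk1),
      inter_subset_inter_left _ (prod_mono hk2 hk2)⟩
  have hDempty : ¬ (⋂ i, D i).Nonempty := by
    rintro ⟨p, hp⟩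
    rw [mem_iInter] at hp
    have hp1 : p.1 ∈ C := mem_iInter.2 fun i => ((hp i).1).1
    have hp2 : p.2 ∈ C := mem_iInter.2 fun i => ((hp i).1).2
    have := Metric.dist_le_diam_of_mem hCb hp1 hp2
    have := (hp (Classical.arbitrary ι)).2
    simp only [mem_setOf_eq] at this
    linarith
  have : ∃ i, ¬ (D i).Nonempty := by
    by_contra hc
    push_neg at hc
    exact hDempty (IsCompact.nonempty_iInter_of_directed_nonempty_isCompact_isClosed
      D hDdir hc hDcomp hDcl)
  obtain ⟨i, hi⟩ := this
  refine ⟨i, lt_of_le_of_lt (Metric.diam_le_of_forall_dist_le hr'0 ?_) hr'r⟩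
  intro p hp q hq
  by_contra hlt
  push_neg at hlt
  exact hi ⟨(p, q), ⟨hp, hq⟩, hlt.le⟩

instance : Nonempty {ε : ℝ // 0 < ε} := ⟨⟨1, one_pos⟩⟩

/-- Core lemma: with `K ε` a monotone family of closed sets each containing `x`,
in a compact space, the intersection of the `ε`-chain components of `x` in `K ε`
is preconnected. -/
lemma key_connected [CompactSpace X] {K : ℝ → Set X} {x : X}
    (hmono : ∀ {a b : ℝ}, a ≤ b → K a ⊆ K b)
    (hcl : ∀ ε : ℝ, 0 < ε → IsClosed (K ε)) (hxK : ∀ ε : ℝ, 0 < ε → x ∈ K ε) :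
    IsPreconnected (⋂ ε : {ε : ℝ // 0 < ε}, Reach ε.1 (K ε.1) x) := by
  set ι := {ε : ℝ // 0 < ε}
  set Z : ι → Set X := fun ε => Reach ε.1 (K ε.1) x with hZ
  set C := ⋂ ε : ι, Z ε with hCdef
  have hZcl : ∀ i : ι, IsClosed (Z i) := fun i => isClosed_reach i.2 (hcl i.1 i.2) x
  have hZcomp : ∀ i : ι, IsCompact (Z i) := fun i => (hZcl i).isCompact
  have hZmono : ∀ {i j : ι}, i.1 ≤ j.1 → Z i ⊆ Z j :=
    fun {i j} hij => reach_mono hij (hmono hij) x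
  have hdir : Directed (· ⊇ ·) Z := by
    intro i j
    refine ⟨⟨min i.1 j.1, lt_min i.2 j.2⟩, hZmono (min_le_left _ _), hZmono (min_le_right _ _)⟩
  have hxC : x ∈ C := mem_iInter.2 fun i => self_mem_reach _ _ _
  have hCcl : IsClosed C := isClosed_iInter hZcl
  have hCsubZ : ∀ i : ι, C ⊆ Z i := fun i => iInter_subset _ _
  -- one-sided claim
  have claim : ∀ U V : Set X, IsOpen U → IsOpen V → C ⊆ U ∪ V →
      C ∩ (U ∩ V) = ∅ → x ∈ U → (C ∩ V).Nonempty → False := by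
    intro U V hU hV hCUV hemp hxU hCV
    have hA_eq : C ∩ U = C \ V := by
      ext z
      constructor
      · rintro ⟨hzC, hzU⟩
        refine ⟨hzC, fun hzV => ?_⟩
        have : z ∈ C ∩ (U ∩ V) := ⟨hzC, hzU, hzV⟩
        rw [hemp] at this; exact this
      · rintro ⟨hzC, hzV⟩
        rcases hCUV hzC with h | h
        · exact ⟨hzC, h⟩
        · exact absurd h hzV
    have hB_eq : C ∩ V = C \ U := by
      ext z
      constructor
      · rintro ⟨hzC, hzV⟩
        refine ⟨hzC, fun hzU => ?_⟩
        have : z ∈ C ∩ (U ∩ V) := ⟨hzC, hzU, hzV⟩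
        rw [hemp] at this; exact this
      · rintro ⟨hzC, hzU⟩
        rcases hCUV hzC with h | h
        · exact absurd h hzU
        · exact ⟨hzC, h⟩
    have hAcomp : IsCompact (C ∩ U) := by rw [hA_eq]; exact (hCcl.sdiff hV).isCompact
    have hBcl : IsClosed (C ∩ V) := by rw [hB_eq]; exact hCcl.sdiff hU
    have hABdisj : Disjoint (C ∩ U) (C ∩ V) := by
      rw [disjoint_iff_inter_eq_empty]
      rw [← hemp]
      ext z; constructor
      · rintro ⟨⟨hzC, hzU⟩, ⟨_, hzV⟩⟩; exact ⟨hzC, hzU, hzV⟩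
      · rintro ⟨hzC, hzU, hzV⟩; exact ⟨⟨hzC, hzU⟩, ⟨hzC, hzV⟩⟩
    obtain ⟨δ₀, hδ₀, hdisj₀⟩ := hABdisj.exists_thickenings hAcomp hBcl
    set U₀ := thickening δ₀ (C ∩ U) with hU₀
    set V₀ := thickening δ₀ (C ∩ V) with hV₀
    have hCsub : C ⊆ U₀ ∪ V₀ := by
      intro z hzC
      rcases hCUV hzC with h | h
      · exact Or.inl (self_subset_thickening hδ₀ _ ⟨hzC, h⟩)
      · exact Or.inr (self_subset_thickening hδ₀ _ ⟨hzC, h⟩)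
    obtain ⟨i₀, hi₀⟩ := exists_subset_of_iInter_subset Z hdir hZcomp hZcl
      (isOpen_thickening.union isOpen_thickening) hCsub
    set A₁ := Z i₀ \ V₀ with hA₁
    set B₁ := Z i₀ \ U₀ with hB₁
    have hA₁comp : IsCompact A₁ := ((hZcl i₀).sdiff isOpen_thickening).isCompact
    have hB₁cl : IsClosed B₁ := (hZcl i₀).sdiff isOpen_thickening
    have hA₁B₁ : Disjoint A₁ B₁ := by
      rw [disjoint_iff_inter_eq_empty]
      ext p
      simp only [mem_inter_iff, mem_empty_iff_false, iff_false]
      rintro ⟨⟨hp, hpV₀⟩, ⟨_, hpU₀⟩⟩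
      rcases hi₀ hp with h | h
      · exact hpU₀ h
      · exact hpV₀ h
    obtain ⟨δ₁, hδ₁, hdisj₁⟩ := hA₁B₁.exists_thickenings hA₁comp hB₁cl
    set ε' : ι := ⟨min i₀.1 δ₁ / 2, by have := i₀.2; positivity⟩ with hε'
    have hε'le : ε'.1 ≤ i₀.1 := by
      have : min i₀.1 δ₁ ≤ i₀.1 := min_le_left _ _
      have h2 := i₀.2
      simp only [hε']
      linarith [min_le_left i₀.1 δ₁]
    have hε'lt : ε'.1 < δ₁ := by
      simp only [hε']
      have := min_le_right i₀.1 δ₁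
      linarith
    have hkey : Z ε' ⊆ A₁ := by
      intro z hz
      change Relation.ReflTransGen (Step ε'.1 (K ε'.1)) x z at hz
      induction hz with
      | refl =>
        refine ⟨self_mem_reach _ _ _, fun hxV₀ => ?_⟩
        have hxU₀ : x ∈ U₀ := self_subset_thickening hδ₀ _ ⟨hxC, hxU⟩
        exact (disjoint_left.1 hdisj₀) hxU₀ hxV₀
      | @tail b c hxb hbc ih =>
        have hcZ : c ∈ Z i₀ := hZmono hε'le (hxb.tail hbc)
        by_contra hcA₁
        have hcV₀ : c ∈ V₀ := by
          by_contra hcV₀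
          exact hcA₁ ⟨hcZ, hcV₀⟩
        have hcU₀ : c ∉ U₀ := (disjoint_right.1 hdisj₀) hcV₀
        have hcB₁ : c ∈ B₁ := ⟨hcZ, hcU₀⟩
        have hcTB : c ∈ thickening δ₁ B₁ := self_subset_thickening hδ₁ _ hcB₁
        have hcTA : c ∈ thickening δ₁ A₁ := by
          rw [mem_thickening_iff]
          exact ⟨b, ih, by rw [dist_comm]; exact lt_of_le_of_lt hbc.2 hε'lt⟩
        exact (disjoint_left.1 hdisj₁) hcTA hcTB
    obtain ⟨b, hbC, hbV⟩ := hCV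
    have hbA₁ : b ∈ A₁ := hkey (hCsubZ ε' hbC)
    exact hbA₁.2 (self_subset_thickening hδ₀ _ ⟨hbC, hbV⟩)
  -- assemble
  intro U V hU hV hCUV hCU hCV
  by_contra hne
  rw [not_nonempty_iff_eq_empty] at hne
  rcases hCUV hxC with hxU | hxV
  · exact claim U V hU hV hCUV hne hxU hCV
  · refine claim V U hV hU ?_ ?_ hxV hCU
    · rw [union_comm]; exact hCUV
    · rw [inter_comm V U]; exact hne

end Stmt14Aux

theorem stmt14 {X : Type*} [MetricSpace X] [CompactSpace X] (n : ℕ) (hn : 1 ≤ n) :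
    IsOpen {f : C(X, X) | ∀ y : X, ∀ x ∈ (⇑f) ⁻¹' {y},
      Metric.diam (connectedComponentIn ((⇑f) ⁻¹' {y}) x) < 1 / (n:ℝ)} := by
  classical
  rcases isEmpty_or_nonempty X with hX | hX
  · have : {f : C(X, X) | ∀ y : X, ∀ x ∈ (⇑f) ⁻¹' {y},
        Metric.diam (connectedComponentIn ((⇑f) ⁻¹' {y}) x) < 1 / (n:ℝ)} = univ :=
      eq_univ_of_forall (fun f y => (IsEmpty.false y).elim)
    rw [this]; exact isOpen_univ
  have hb : ∀ s : Set X, Bornology.IsBounded s := fun s =>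
    (isCompact_univ.isBounded).subset (subset_univ s)
  rw [Metric.isOpen_iff]
  intro f hf
  simp only [mem_setOf_eq] at hf
  -- pointwise: a good ε at every point
  have hpt : ∀ x : X, ∃ ε : {ε : ℝ // 0 < ε},
      Metric.diam (Stmt14Aux.Reach ε.1 ((⇑f) ⁻¹' closedBall (f x) ε.1) x) < 1 / (n:ℝ) := by
    intro x
    set K : ℝ → Set X := fun ε => (⇑f) ⁻¹' closedBall (f x) ε with hK
    set Z : {ε : ℝ // 0 < ε} → Set X := fun ε => Stmt14Aux.Reach ε.1 (K ε.1) x with hZ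
    have hmono : ∀ {a b : ℝ}, a ≤ b → K a ⊆ K b := fun {a b} hab =>
      preimage_mono (closedBall_subset_closedBall hab)
    have hcl : ∀ ε : ℝ, 0 < ε → IsClosed (K ε) := fun ε _ =>
      IsClosed.preimage f.continuous Metric.isClosed_closedBall
    have hxK : ∀ ε : ℝ, 0 < ε → x ∈ K ε := fun ε hε => by
      simp only [hK, mem_preimage, mem_closedBall, dist_self]; linarith
    have hZcl : ∀ i, IsClosed (Z i) := fun i => Stmt14Aux.isClosed_reach i.2 (hcl i.1 i.2) x
    have hZcomp : ∀ i, IsCompact (Z i) := fun i => (hZcl i).isCompact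
    have hdir : Directed (· ⊇ ·) Z := fun i j =>
      ⟨⟨min i.1 j.1, lt_min i.2 j.2⟩,
        Stmt14Aux.reach_mono (min_le_left _ _) (hmono (min_le_left _ _)) x,
        Stmt14Aux.reach_mono (min_le_right _ _) (hmono (min_le_right _ _)) x⟩
    have hCfib : (⋂ i, Z i) ⊆ (⇑f) ⁻¹' {f x} := by
      intro z hz
      rw [mem_iInter] at hz
      have hd : ∀ ε : ℝ, 0 < ε → dist (f z) (f x) ≤ ε := by
        intro ε hε
        have hzK := Stmt14Aux.reach_subset (hxK ε hε) (hz ⟨ε, hε⟩)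
        exact mem_closedBall.1 (mem_preimage.1 hzK)
      have h0 : dist (f z) (f x) ≤ 0 :=
        le_of_forall_pos_le_add (fun ε hε => by rw [zero_add]; exact hd ε hε)
      have : f z = f x := dist_le_zero.1 h0
      simp only [mem_preimage, mem_singleton_iff]; exact this
    have hconn : IsPreconnected (⋂ i, Z i) := Stmt14Aux.key_connected hmono hcl hxK
    have hxC : x ∈ ⋂ i, Z i := mem_iInter.2 fun i => Stmt14Aux.self_mem_reach _ _ _
    have hsub := hconn.subset_connectedComponentIn hxC hCfib
    have hdiamC : Metric.diam (⋂ i, Z i) < 1 / (n:ℝ) :=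
      lt_of_le_of_lt (Metric.diam_mono hsub (hb _)) (hf (f x) x rfl)
    exact Stmt14Aux.exists_small_diam Z hdir hZcomp hZcl hdiamC
  choose εx hεx using hpt
  have hcont : ∀ x : X, ∃ r, 0 < r ∧ ∀ x', dist x' x < r → dist (f x') (f x) < (εx x).1 / 8 := by
    intro x
    obtain ⟨r, hr, h⟩ := Metric.continuous_iff.1 f.continuous x ((εx x).1 / 8)
      (by have := (εx x).2; positivity)
    exact ⟨r, hr, h⟩
  choose r hrpos hrprop using hcont
  obtain ⟨t, ht⟩ := isCompact_univ.elim_finite_subcover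
    (fun x : X => ball x (min (r x) ((εx x).1 / 2))) (fun x => isOpen_ball)
    (fun z _ => mem_iUnion.2 ⟨z, mem_ball_self (lt_min (hrpos z) (by have := (εx z).2; positivity))⟩)
  have htne : t.Nonempty := by
    obtain ⟨i, hit, -⟩ := mem_iUnion₂.1 (ht (mem_univ hX.some))
    exact ⟨i, hit⟩
  set δ : ℝ := t.inf' htne (fun x => (εx x).1 / 8) with hδdef
  have hδpos : 0 < δ := by
    rw [hδdef, Finset.lt_inf'_iff]
    intro b _
    have := (εx b).2; positivity
  refine ⟨δ, hδpos, ?_⟩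
  intro g hg
  rw [mem_ball] at hg
  have hgf : ∀ z, dist (g z) (f z) < δ := (ContinuousMap.dist_lt_iff hδpos).1 hg
  intro y x' hx'
  have hgx' : g x' = y := hx'
  obtain ⟨i, hit, hx'i⟩ := mem_iUnion₂.1 (ht (mem_univ x'))
  set ε : ℝ := (εx i).1 with hεdef
  have hεpos : 0 < ε := (εx i).2
  have hδε : δ ≤ ε / 8 := Finset.inf'_le _ hit
  rw [mem_ball] at hx'i
  have hx'r : dist x' i < r i := lt_of_lt_of_le hx'i (min_le_left _ _)
  have hx'ε : dist x' i < ε / 2 := lt_of_lt_of_le hx'i (min_le_right _ _)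
  have hfx' : dist (f x') (f i) < ε / 8 := hrprop i x' hx'r
  have hfib : (⇑g) ⁻¹' {y} ⊆ (⇑f) ⁻¹' closedBall (f i) (ε / 2) := by
    intro z hz
    have hgz : g z = y := hz
    have h1 : dist (f z) (f i) ≤ dist (f z) (g z) + dist (g z) (f x') + dist (f x') (f i) :=
      dist_triangle4 _ _ _ _
    have h2 : dist (g z) (f x') = dist (g x') (f x') := by rw [hgz, hgx']
    have h3 : dist (g x') (f x') < δ := hgf x'
    simp only [mem_preimage, mem_closedBall]
    have h4 : dist (f z) (g z) < δ := by rw [dist_comm]; exact hgf z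
    rw [h2] at h1
    linarith
  have hx'K : x' ∈ (⇑f) ⁻¹' closedBall (f i) ε :=
    preimage_mono (closedBall_subset_closedBall (by linarith)) (hfib hx')
  have hsub1 : connectedComponentIn ((⇑g) ⁻¹' {y}) x' ⊆
      Stmt14Aux.Reach (ε / 2) (connectedComponentIn ((⇑g) ⁻¹' {y}) x') x' :=
    Stmt14Aux.preconnected_subset_reach (by positivity)
      (isPreconnected_connectedComponentIn) (mem_connectedComponentIn hx')
  have hsub2 : Stmt14Aux.Reach (ε / 2) (connectedComponentIn ((⇑g) ⁻¹' {y}) x') x' ⊆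
      Stmt14Aux.Reach ε ((⇑f) ⁻¹' closedBall (f i) ε) x' :=
    Stmt14Aux.reach_mono (by linarith)
      (((connectedComponentIn_subset _ _).trans hfib).trans
        (preimage_mono (closedBall_subset_closedBall (by linarith)))) x'
  have hsub3 : Stmt14Aux.Reach ε ((⇑f) ⁻¹' closedBall (f i) ε) x' ⊆
      Stmt14Aux.Reach ε ((⇑f) ⁻¹' closedBall (f i) ε) i :=
    Stmt14Aux.reach_head hx'K (by rw [dist_comm]; linarith)
  calc Metric.diam (connectedComponentIn ((⇑g) ⁻¹' {y}) x')
      ≤ Metric.diam (Stmt14Aux.Reach ε ((⇑f) ⁻¹' closedBall (f i) ε) i) :=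
        Metric.diam_mono ((hsub1.trans hsub2).trans hsub3) (hb _)
    _ < 1 / (n:ℝ) := hεx i
end

section
/- Let X be a compact metric space with the property: for each integer m ≥ 1 there is a continuous map p : X → X with image Y = p(X) such that sup_x d(p(x), x) < 1/m and { g ∈ C(Y,Y) : all fibers of g are zero-dimensional } is dense in C(Y,Y). Then { f ∈ C(X,X) : all fibers of f are zero-dimensional } is dense (hence, being Gδ, residual) in C(X,X). -/
open Metric Set Filter

theorem keyAux {X : Type*} [MetricSpace X] [CompactSpace X] {K : Set X} (hK : IsClosed K)
    {g : X → X} (hg : ContinuousOn g K)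
    (hfib : ∀ y : X, ∀ x ∈ {z ∈ K | g z = y}, connectedComponentIn {z ∈ K | g z = y} x = {x})
    {c : ℝ} (hc : 0 < c) :
    ∃ δ > (0:ℝ), ∀ A : Set X, A ⊆ K → IsPreconnected A →
      (∀ a ∈ A, ∀ b ∈ A, dist (g a) (g b) ≤ δ) → ∀ a ∈ A, ∀ b ∈ A, dist a b ≤ c := by
  by_contra hcon
  push_neg at hcon
  have hseq : ∀ k : ℕ, ∃ (A : Set X) (a b : X), A ⊆ K ∧ IsPreconnected A ∧
      (∀ x ∈ A, ∀ y ∈ A, dist (g x) (g y) ≤ 1/((k:ℝ)+1)) ∧ a ∈ A ∧ b ∈ A ∧ c < dist a b := by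
    intro k
    obtain ⟨A, hA1, hA2, hA3, a, ha, b, hb, hab⟩ := hcon (1/((k:ℝ)+1)) (by positivity)
    exact ⟨A, a, b, hA1, hA2, hA3, ha, hb, hab⟩
  choose A a b hAK hApre hAg ha hb hab using hseq
  obtain ⟨⟨α, β⟩, φ, hφ, hlim⟩ := SeqCompactSpace.tendsto_subseq (fun k => (a k, b k))
  have hαlim : Tendsto (fun k => a (φ k)) atTop (nhds α) :=
    (continuous_fst.tendsto _).comp hlim
  have hβlim : Tendsto (fun k => b (φ k)) atTop (nhds β) :=
    (continuous_snd.tendsto _).comp hlim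
  -- the "limsup" sets
  set C : ℕ → Set X := fun N => closure (⋃ j, ⋃ _ : N ≤ j, A (φ j)) with hC
  have hCcl : ∀ N, IsClosed (C N) := fun N => isClosed_closure
  have hCK : ∀ N, C N ⊆ K := fun N =>
    closure_minimal (iUnion₂_subset fun j _ => hAK _) hK
  have hCmono : ∀ {M N : ℕ}, M ≤ N → C N ⊆ C M := by
    intro M N hMN
    exact closure_mono (iUnion₂_subset fun j hj => subset_iUnion₂ (s := fun j _ => A (φ j)) j (hMN.trans hj))
  have hmemA : ∀ N k, N ≤ k → a (φ k) ∈ ⋃ j, ⋃ _ : N ≤ j, A (φ j) :=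
    fun N k hk => mem_iUnion₂.mpr ⟨k, hk, ha _⟩
  have hαC : ∀ N, α ∈ C N := by
    intro N
    exact mem_closure_of_tendsto hαlim (Filter.eventually_atTop.mpr ⟨N, fun k hk => hmemA N k hk⟩)
  have hβC : ∀ N, β ∈ C N := by
    intro N
    refine mem_closure_of_tendsto hβlim (Filter.eventually_atTop.mpr ⟨N, fun k hk => ?_⟩)
    exact mem_iUnion₂.mpr ⟨k, hk, hb _⟩
  have hαK : α ∈ K := hCK 0 (hαC 0)
  have hdistαβ : c ≤ dist α β :=
    ge_of_tendsto' (hαlim.dist hβlim) (fun k => (hab (φ k)).le)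
  -- uniform continuity of g on K
  obtain ⟨UC⟩ : Nonempty (UniformContinuousOn g K) := ⟨hK.isCompact.uniformContinuousOn_of_continuous hg⟩
  have hUC := Metric.uniformContinuousOn_iff.mp UC
  -- g(a (φ k)) → g α
  have hgαlim : Tendsto (fun k => g (a (φ k))) atTop (nhds (g α)) := by
    have h1 : Tendsto (fun k => a (φ k)) atTop (nhdsWithin α K) :=
      tendsto_nhdsWithin_iff.mpr ⟨hαlim, Filter.Eventually.of_forall fun k => hAK _ (ha _)⟩
    exact (hg α hαK).tendsto.comp h1
  -- every point of L := ⋂ C N is in the fiber of g over g α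
  have hgy : ∀ x, (∀ N, x ∈ C N) → g x = g α := by
    intro x hx
    apply eq_of_forall_dist_le
    intro ε hε
    obtain ⟨η, hη, hηs⟩ := hUC (ε/4) (by positivity)
    obtain ⟨N₁, hN₁⟩ := Filter.eventually_atTop.mp (hgαlim.eventually (Metric.ball_mem_nhds (g α) (by positivity : (0:ℝ) < ε/4)))
    obtain ⟨N₂, hN₂⟩ := exists_nat_one_div_lt (by positivity : (0:ℝ) < ε/4)
    set N := max N₁ N₂
    obtain ⟨z, hz, hxz⟩ := Metric.mem_closure_iff.mp (hx N) η hη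
    obtain ⟨j, hjN, hzA⟩ := mem_iUnion₂.mp hz
    have hxK : x ∈ K := hCK N (hx N)
    have hzK : z ∈ K := hAK _ hzA
    have h1 : dist (g x) (g z) < ε/4 := hηs x hxK z hzK hxz
    have h2 : dist (g z) (g (a (φ j))) ≤ 1/((j:ℝ)+1) := by
      have h0 := hAg (φ j) z hzA (a (φ j)) (ha _)
      refine h0.trans ?_
      have h1 : (j:ℝ) ≤ (φ j : ℝ) := Nat.cast_le.mpr hφ.le_apply
      exact one_div_le_one_div_of_le (by positivity) (by linarith)
    have h2' : dist (g z) (g (a (φ j))) < ε/4 := by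
      refine lt_of_le_of_lt h2 (lt_of_le_of_lt ?_ hN₂)
      have hjN₂ : (N₂:ℝ) ≤ (j:ℝ) := Nat.cast_le.mpr (le_trans (le_max_right _ _) hjN)
      exact one_div_le_one_div_of_le (by positivity) (by linarith)
    have h3 : dist (g (a (φ j))) (g α) < ε/4 := hN₁ j (le_trans (le_max_left _ _) hjN)
    calc dist (g x) (g α) ≤ dist (g x) (g z) + dist (g z) (g (a (φ j))) + dist (g (a (φ j))) (g α) :=
          dist_triangle4 _ _ _ _
      _ ≤ ε := by linarith
  -- L is preconnected
  have hLpre : IsPreconnected (⋂ N, C N) := by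
    set L := ⋂ N, C N with hLdef
    have hLcl : IsClosed L := isClosed_iInter hCcl
    intro u v hu hv hsub ⟨xu, hxu⟩ ⟨xv, hxv⟩
    by_contra hne
    rw [not_nonempty_iff_eq_empty] at hne
    set P := L \ v with hPdef
    set Q := L \ u with hQdef
    have hPu : P ⊆ u := by
      rintro x ⟨hxL, hxv'⟩
      rcases hsub hxL with h | h
      · exact h
      · exact absurd h hxv'
    have hQv : Q ⊆ v := by
      rintro x ⟨hxL, hxu'⟩
      rcases hsub hxL with h | h
      · exact absurd h hxu'
      · exact h
    have hPne : P.Nonempty := ⟨xu, hxu.1, fun hvv => by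
      have : xu ∈ L ∩ (u ∩ v) := ⟨hxu.1, hxu.2, hvv⟩
      simp [hne] at this⟩
    have hQne : Q.Nonempty := ⟨xv, hxv.1, fun huu => by
      have : xv ∈ L ∩ (u ∩ v) := ⟨hxv.1, huu, hxv.2⟩
      simp [hne] at this⟩
    have hPcomp : IsCompact P := (hLcl.sdiff hv).isCompact
    have hQcomp : IsCompact Q := (hLcl.sdiff hu).isCompact
    have hPQL : L ⊆ P ∪ Q := by
      intro x hxL
      rcases hsub hxL with h | h
      · left; exact ⟨hxL, fun hvv => by
          have : x ∈ L ∩ (u ∩ v) := ⟨hxL, h, hvv⟩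
          simp [hne] at this⟩
      · right; exact ⟨hxL, fun huu => by
          have : x ∈ L ∩ (u ∩ v) := ⟨hxL, huu, h⟩
          simp [hne] at this⟩
    -- minimal distance between P and Q
    obtain ⟨⟨p₀, q₀⟩, hpq₀, hmin'⟩ := (hPcomp.prod hQcomp).exists_isMinOn
      (hPne.prod hQne) continuous_dist.continuousOn
    have hmin : ∀ z ∈ P ×ˢ Q, dist p₀ q₀ ≤ dist z.1 z.2 := fun z hz => hmin' hz
    set d := dist p₀ q₀ with hd
    have hPQdisj : ∀ x, x ∈ P → x ∈ Q → False := by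
      rintro x ⟨hxL, hxv'⟩ ⟨_, hxu'⟩
      rcases hsub hxL with h | h
      · exact hxu' h
      · exact hxv' h
    have hdpos : 0 < d := by
      rcases lt_or_eq_of_le (dist_nonneg : (0:ℝ) ≤ dist p₀ q₀) with h | h
      · exact h
      · exfalso
        have heq : p₀ = q₀ := eq_of_dist_eq_zero h.symm
        exact hPQdisj p₀ hpq₀.1 (heq ▸ hpq₀.2)
    have hsep : ∀ x ∈ P, ∀ y ∈ Q, d ≤ dist x y := fun x hx y hy => hmin (x, y) ⟨hx, hy⟩
    -- the main contradiction machine, symmetric in P and Q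
    have main : ∀ (P' Q' : Set X), IsCompact P' → IsCompact Q' → Q' ⊆ L →
        (∀ x ∈ P', ∀ y ∈ Q', d ≤ dist x y) → (L ⊆ P' ∪ Q') → α ∈ P' → Q'.Nonempty → False := by
      intro P' Q' hP'c hQ'c hQ'L hsep' hcov hαP' ⟨q, hq⟩
      set u' := thickening (d/3) P' with hu'
      set v' := thickening (d/3) Q' with hv'
      have hdisj : ∀ x, x ∈ u' → x ∈ v' → False := by
        intro x hxu' hxv'
        obtain ⟨p, hp, hxp⟩ := mem_thickening_iff.mp hxu'
        obtain ⟨q', hq', hxq⟩ := mem_thickening_iff.mp hxv'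
        have := hsep' p hp q' hq'
        have : d ≤ dist x p + dist x q' := le_trans this (by
          calc dist p q' ≤ dist p x + dist x q' := dist_triangle _ _ _
            _ = dist x p + dist x q' := by rw [dist_comm p x])
        linarith
      have hLsub : L ⊆ u' ∪ v' := fun x hx =>
        (hcov hx).imp (fun h => self_subset_thickening (by positivity) P' h)
          (fun h => self_subset_thickening (by positivity) Q' h)
      -- some C N fits inside u' ∪ v'
      obtain ⟨N₀, hN₀⟩ := exists_subset_nhds_of_isCompact'
        (fun M N => ⟨max M N, hCmono (le_max_left _ _), hCmono (le_max_right _ _)⟩)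
        (fun N => (hCcl N).isCompact) hCcl
        (fun x hx => (isOpen_thickening.union isOpen_thickening).mem_nhds (hLsub hx))
      have hAsub : ∀ j, N₀ ≤ j → A (φ j) ⊆ u' ∪ v' := by
        intro j hj
        refine subset_trans ?_ hN₀
        exact subset_trans (subset_iUnion₂ (s := fun j _ => A (φ j)) j hj) subset_closure
      have hside : ∀ j, N₀ ≤ j → A (φ j) ⊆ u' ∨ A (φ j) ⊆ v' := by
        intro j hj
        by_contra hcontra
        push_neg at hcontra
        obtain ⟨x₁, hx₁A, hx₁⟩ := not_subset.mp hcontra.1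
        obtain ⟨x₂, hx₂A, hx₂⟩ := not_subset.mp hcontra.2
        have hx₁v : x₁ ∈ v' := (hAsub j hj hx₁A).resolve_left hx₁
        have hx₂u : x₂ ∈ u' := (hAsub j hj hx₂A).resolve_right hx₂
        obtain ⟨z, hzA, hzu, hzv⟩ := hApre (φ j) u' v' isOpen_thickening isOpen_thickening
          (hAsub j hj) ⟨x₂, hx₂A, hx₂u⟩ ⟨x₁, hx₁A, hx₁v⟩
        exact hdisj z hzu hzv
      -- eventually a (φ k) ∈ u'
      have hαu' : α ∈ u' := self_subset_thickening (by positivity) P' hαP'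
      obtain ⟨N₁, hN₁⟩ := Filter.eventually_atTop.mp (hαlim.eventually (isOpen_thickening.eventually_mem hαu'))
      set M := max N₀ N₁ with hM
      have hAw : ∀ j, M ≤ j → A (φ j) ⊆ u' := by
        intro j hj
        rcases hside j (le_trans (le_max_left _ _) hj) with h1 | h1
        · exact h1
        · exact absurd (h1 (ha (φ j))) (fun hv => hdisj _ (hN₁ j (le_trans (le_max_right _ _) hj)) hv)
      -- q ∈ Q' ⊆ L ⊆ C M, but all the approximating sets are d/3-close to P'
      obtain ⟨z, hz, hqz⟩ := Metric.mem_closure_iff.mp (mem_iInter.mp (hQ'L hq) M) (d/3) (by positivity)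
      obtain ⟨j, hjM, hzA⟩ := mem_iUnion₂.mp hz
      have hzu : z ∈ u' := hAw j hjM hzA
      obtain ⟨p, hp, hzp⟩ := mem_thickening_iff.mp hzu
      have := hsep' p hp q hq
      have : dist p q ≤ dist p z + dist z q := dist_triangle _ _ _
      have h1 : dist p z < d/3 := by rw [dist_comm]; exact hzp
      have h2 : dist z q < d/3 := by rw [dist_comm]; exact hqz
      linarith [hsep' p hp q hq]
    rcases hPQL (mem_iInter.mpr hαC) with hαP | hαQ
    · exact main P Q hPcomp hQcomp diff_subset hsep hPQL hαP hQne
    · refine main Q P hQcomp hPcomp diff_subset ?_ ?_ hαQ hPne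
      · intro x hx y hy; rw [dist_comm]; exact hsep y hy x hx
      · rw [union_comm]; exact hPQL
  -- conclude
  have hLfib : (⋂ N, C N) ⊆ {z ∈ K | g z = g α} := fun x hx =>
    ⟨hCK 0 (mem_iInter.mp hx 0), hgy x (mem_iInter.mp hx)⟩
  have hαL : α ∈ ⋂ N, C N := mem_iInter.mpr hαC
  have hβL : β ∈ ⋂ N, C N := mem_iInter.mpr hβC
  have := hLpre.subset_connectedComponentIn hαL hLfib
  rw [hfib (g α) α ⟨hαK, rfl⟩] at this
  have : β = α := this hβL
  rw [this] at hdistαβ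
  simp at hdistαβ
  linarith
theorem stmt15 {X : Type*} [MetricSpace X] [CompactSpace X]
    (h : ∀ m : ℕ, 1 ≤ m → ∃ p : X → X, Continuous p ∧
      (∀ x, dist (p x) x < 1 / (m:ℝ)) ∧
      -- maps with zero-dimensional fibers are dense among self-maps of Y = range p:
      ∀ g : X → X, ContinuousOn g (range p) → MapsTo g (range p) (range p) →
        ∀ δ > (0:ℝ), ∃ g' : X → X, ContinuousOn g' (range p) ∧
          MapsTo g' (range p) (range p) ∧ (∀ x ∈ range p, dist (g x) (g' x) < δ) ∧
          ∀ y ∈ range p, ∀ x ∈ {z ∈ range p | g' z = y},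
            connectedComponentIn {z ∈ range p | g' z = y} x = {x}) :
    Dense {f : C(X, X) | ∀ y : X, ∀ x ∈ (⇑f) ⁻¹' {y},
      connectedComponentIn ((⇑f) ⁻¹' {y}) x = {x}} := by
  set W : ℕ → Set C(X, X) := fun n => {f | ∃ δ > (0:ℝ), ∀ A : Set X, IsPreconnected A →
    (∀ a ∈ A, ∀ b ∈ A, dist (f a) (f b) ≤ δ) →
    ∀ a ∈ A, ∀ b ∈ A, dist a b ≤ 1/((n:ℝ)+1)} with hWdef
  have hW_open : ∀ n, IsOpen (W n) := by
    intro n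
    rw [Metric.isOpen_iff]
    rintro f ⟨δ, hδ, hf⟩
    refine ⟨δ/4, by positivity, ?_⟩
    intro f'' hf''
    rw [Metric.mem_ball] at hf''
    refine ⟨δ/4, by positivity, ?_⟩
    intro A hA hbound a haA b hbA
    refine hf A hA ?_ a haA b hbA
    intro x hx y hy
    have h1 : dist (f x) (f'' x) ≤ dist f f'' := ContinuousMap.dist_apply_le_dist x
    have h2 : dist (f'' y) (f y) ≤ dist f'' f := ContinuousMap.dist_apply_le_dist y
    have h3 := hbound x hx y hy
    have h4 : dist f f'' < δ/4 := by rw [dist_comm]; exact hf''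
    calc dist (f x) (f y) ≤ dist (f x) (f'' x) + dist (f'' x) (f'' y) + dist (f'' y) (f y) :=
          dist_triangle4 _ _ _ _
      _ ≤ δ := by linarith
  have hW_dense : ∀ n, Dense (W n) := by
    intro n
    rw [Metric.dense_iff]
    intro f ε hε
    obtain ⟨η, hη, hfu⟩ := Metric.uniformContinuous_iff.mp
      (CompactSpace.uniformContinuous_of_continuous f.continuous) (ε/3) (by positivity)
    obtain ⟨m₀, hm₀⟩ := exists_nat_one_div_lt
      (lt_min hη (lt_min (by positivity : (0:ℝ) < ε/3)
        (by positivity : (0:ℝ) < 1/(4*((n:ℝ)+1)))) : (0:ℝ) < min η (min (ε/3) (1/(4*((n:ℝ)+1)))))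
    set m := m₀ + 1 with hmdef
    have hmcast : (1:ℝ)/(m:ℝ) = 1/((m₀:ℝ)+1) := by push_cast [hmdef]; ring_nf
    have hmη : (1:ℝ)/(m:ℝ) < η := by rw [hmcast]; exact lt_of_lt_of_le hm₀ (min_le_left _ _)
    have hmε : (1:ℝ)/(m:ℝ) < ε/3 := by
      rw [hmcast]; exact lt_of_lt_of_le hm₀ ((min_le_right _ _).trans (min_le_left _ _))
    have hmn : (1:ℝ)/(m:ℝ) < 1/(4*((n:ℝ)+1)) := by
      rw [hmcast]; exact lt_of_lt_of_le hm₀ ((min_le_right _ _).trans (min_le_right _ _))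
    obtain ⟨p, hp, hpd, hdense⟩ := h m (Nat.le_add_left 1 m₀)
    have hYcomp : IsCompact (range p) := isCompact_range hp
    have hYcl : IsClosed (range p) := hYcomp.isClosed
    obtain ⟨g', hg'c, hg'm, hg'd, hg'fib⟩ := hdense (fun x => p (f x))
      ((hp.comp f.continuous).continuousOn) (fun x _ => mem_range_self _) (ε/3) (by positivity)
    have hfib' : ∀ y : X, ∀ x ∈ {z ∈ range p | g' z = y},
        connectedComponentIn {z ∈ range p | g' z = y} x = {x} := by
      intro y x hx
      exact hg'fib y (hx.2 ▸ hg'm hx.1) x hx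
    obtain ⟨δ₀, hδ₀, hkey⟩ := keyAux hYcl hg'c hfib'
      (c := 1/(2*((n:ℝ)+1))) (by positivity)
    set f' : C(X, X) := ⟨fun x => g' (p x), hg'c.comp_continuous hp (fun x => mem_range_self x)⟩
      with hf'def
    refine ⟨f', Metric.mem_ball.mpr ?_, δ₀, hδ₀, ?_⟩
    · rw [ContinuousMap.dist_lt_iff hε]
      intro x
      have h1 : dist (g' (p x)) (p (f (p x))) < ε/3 := by
        rw [dist_comm]; exact hg'd (p x) (mem_range_self x)
      have h2 : dist (p (f (p x))) (f (p x)) < ε/3 := lt_trans (hpd (f (p x))) hmε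
      have h3 : dist (f (p x)) (f x) < ε/3 := hfu (lt_trans (hpd x) hmη)
      calc dist (f' x) (f x) ≤ dist (g' (p x)) (p (f (p x))) + dist (p (f (p x))) (f (p x))
            + dist (f (p x)) (f x) := dist_triangle4 _ _ _ _
        _ < ε := by linarith
    · intro A hA hbound a haA b hbA
      have hpA : ∀ x ∈ A, ∀ y ∈ A, dist (p x) (p y) ≤ 1/(2*((n:ℝ)+1)) := by
        have := hkey (p '' A) (image_subset_range p A) (hA.image p hp.continuousOn) ?_
        · intro x hx y hy
          exact this _ ⟨x, hx, rfl⟩ _ ⟨y, hy, rfl⟩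
        · rintro _ ⟨x, hx, rfl⟩ _ ⟨y, hy, rfl⟩
          exact hbound x hx y hy
      have h1 : dist a (p a) < 1/(4*((n:ℝ)+1)) := by
        rw [dist_comm]; exact lt_trans (hpd a) hmn
      have h2 : dist (p b) b < 1/(4*((n:ℝ)+1)) := lt_trans (hpd b) hmn
      have h3 := hpA a haA b hbA
      calc dist a b ≤ dist a (p a) + dist (p a) (p b) + dist (p b) b := dist_triangle4 _ _ _ _
        _ ≤ 1/((n:ℝ)+1) := by
          have : 1/(4*((n:ℝ)+1)) + 1/(2*((n:ℝ)+1)) + 1/(4*((n:ℝ)+1)) = 1/((n:ℝ)+1) := by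
            field_simp; ring
          linarith
  have hdense := dense_iInter_of_isOpen hW_open hW_dense
  refine hdense.mono ?_
  intro f hf
  intro y x hx
  set F := (⇑f) ⁻¹' {y} with hF
  have hFmem : ∀ z ∈ F, f z = y := fun z hz => hz
  refine Subsingleton.eq_singleton_of_mem ?_ (mem_connectedComponentIn hx)
  intro u hu v hv
  have hdistle : ∀ k : ℕ, dist u v ≤ 1/((k:ℝ)+1) := by
    intro k
    obtain ⟨δ, hδ, hfk⟩ := mem_iInter.mp hf k
    refine hfk _ isPreconnected_connectedComponentIn ?_ u hu v hv
    intro s hs t ht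
    have h1 : f s = y := hFmem s (connectedComponentIn_subset F x hs)
    have h2 : f t = y := hFmem t (connectedComponentIn_subset F x ht)
    rw [h1, h2, dist_self]
    exact hδ.le
  have : dist u v ≤ 0 :=
    ge_of_tendsto' tendsto_one_div_add_atTop_nhds_zero_nat hdistle
  exact eq_of_dist_eq_zero (le_antisymm this dist_nonneg)
end

section
/- Let X be a compact metric space, f : X → X continuous, and suppose U_0, U_1, …, U_k are nonempty open sets with pairwise disjoint closures such that f(closure U_i) ⊆ U_{i+1 mod (k+1)} for all i. Then for each i, CR(f) ∩ closure(U_i) ≠ ∅; in fact f^{k+1} maps closure(U_i) into U_i and the chain recurrent set of f^{k+1} restricted to closure(U_i) is nonempty, and chain recurrent points of f^{k+1}|closure(U_i) are chain recurrent points of f. -/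
open Metric Set

variable {X : Type*} [MetricSpace X]

/-- A cluster point of an orbit inside a compact invariant set is chain recurrent. -/
lemma chainRecIn_nonempty [CompactSpace X] (g : X → X) (hg : Continuous g)
    (A : Set X) (hA : IsClosed A) (hAne : A.Nonempty) (hmap : MapsTo g A A) :
    (ChainRecIn g A).Nonempty := by
  obtain ⟨x, hx⟩ := hAne
  have horb : ∀ n, g^[n] x ∈ A := fun n => hmap.iterate n hx
  have hcomp : IsCompact A := hA.isCompact
  obtain ⟨y, hyA, φ, hφ, hconv⟩ := hcomp.tendsto_subseq horb
  refine ⟨y, hyA, ?_⟩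
  intro ε hε
  -- uniform continuity of g
  have hug : UniformContinuous g := CompactSpace.uniformContinuous_of_continuous hg
  obtain ⟨δ', hδ', hδ'prop⟩ := Metric.uniformContinuous_iff.mp hug (ε/2) (by linarith)
  set δ := min δ' (ε/2) with hδdef
  have hδpos : 0 < δ := lt_min hδ' (by linarith)
  -- find n < m with both iterates δ-close to y
  have := Metric.tendsto_atTop.mp hconv δ hδpos
  obtain ⟨J, hJ⟩ := this
  set n := φ J with hn
  set m := φ (J+1) with hm
  have hnm : n < m := hφ (Nat.lt_succ_self J)
  have hdn : dist (g^[n] x) y < δ := hJ J le_rfl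
  have hdm : dist (g^[m] x) y < δ := hJ (J+1) (Nat.le_succ J)
  set N := m - n with hN
  have hNpos : 0 < N := Nat.sub_pos_of_lt hnm
  refine ⟨N, hNpos, fun j => if j = 0 ∨ j = N then y else g^[n + j] x, ?_, ?_, ?_, ?_⟩
  · intro i _
    by_cases h : i = 0 ∨ i = N
    · simp [h, hyA]
    · simp only [h, if_false]; exact horb _
  · simp
  · simp
  · intro i hi
    rcases Nat.eq_zero_or_pos i with hi0 | hipos
    · subst hi0
      simp only [eq_self_iff_true, true_or, if_true]
      by_cases h1 : (1 : ℕ) = 0 ∨ 1 = N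
      · -- then N = 1, target is y
        have hN1 : N = 1 := by omega
        simp only [h1, if_true]
        have h1' : dist (g y) (g (g^[n] x)) < ε/2 :=
          hδ'prop (by rw [dist_comm]; exact lt_of_lt_of_le hdn (min_le_left _ _))
        have h2' : g (g^[n] x) = g^[m] x := by
          have : m = n + 1 := by omega
          rw [this, Function.iterate_succ_apply']
        calc dist (g y) y ≤ dist (g y) (g (g^[n] x)) + dist (g (g^[n] x)) y :=
              dist_triangle _ _ _
          _ < ε/2 + δ := by
              apply add_lt_add h1'; rw [h2']; exact hdm
          _ ≤ ε/2 + ε/2 := by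
              have : δ ≤ ε/2 := min_le_right _ _
              linarith
          _ = ε := by ring
      · simp only [h1, if_false]
        have h1' : dist (g y) (g (g^[n] x)) < ε/2 :=
          hδ'prop (by rw [dist_comm]; exact lt_of_lt_of_le hdn (min_le_left _ _))
        have : g (g^[n] x) = g^[n + 1] x := (Function.iterate_succ_apply' g n x).symm
        rw [← this]
        linarith
    · -- i > 0
      have hiN : i ≠ N := Nat.ne_of_lt hi
      have hi0 : i ≠ 0 := Nat.pos_iff_ne_zero.mp hipos
      simp only [hi0, hiN, or_self, if_false, false_or]
      by_cases h1 : i + 1 = N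
      · simp only [h1, eq_self_iff_true, or_true, if_true]
        have hm' : m = (n + i) + 1 := by omega
        rw [show g (g^[n+i] x) = g^[m] x by rw [hm', Function.iterate_succ_apply']]
        calc dist (g^[m] x) y < δ := hdm
          _ ≤ ε/2 := min_le_right _ _
          _ < ε := by linarith
      · have h2 : ¬(i + 1 = 0 ∨ i + 1 = N) := by omega
        simp only [h2, if_false]
        rw [show g (g^[n+i] x) = g^[n+(i+1)] x by
          rw [show n+(i+1) = (n+i)+1 from by omega, Function.iterate_succ_apply']]
        simpa using hε

/-- Chains for `f^[K]` interpolate to chains for `f`. -/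
lemma chainRecIn_subset_chainRec (f : X → X) (K : ℕ) (hK : 0 < K) (A : Set X) :
    ChainRecIn (f^[K]) A ⊆ ChainRec f := by
  rintro x ⟨-, hx⟩ ε hε
  obtain ⟨n, hn, c, -, hc0, hcn, hstep⟩ := hx ε hε
  refine ⟨n * K, Nat.mul_pos hn hK, fun i => f^[i % K] (c (i / K)), ?_, ?_, ?_⟩
  · simp [Nat.zero_mod, Nat.zero_div, hc0]
  · simp [Nat.mul_mod_left, Nat.mul_div_cancel _ hK, hcn]
  · intro i hi
    obtain ⟨q, r, hrK, rfl⟩ : ∃ q r, r < K ∧ i = K * q + r :=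
      ⟨i / K, i % K, Nat.mod_lt _ hK, (Nat.div_add_mod i K).symm⟩
    show dist (f (f^[(K*q+r) % K] (c ((K*q+r) / K))))
      (f^[(K*q+r+1) % K] (c ((K*q+r+1) / K))) < ε
    have eq1 : (K*q+r) % K = r := by rw [Nat.mul_add_mod, Nat.mod_eq_of_lt hrK]
    have ed1 : (K*q+r) / K = q := by
      rw [Nat.mul_add_div hK, Nat.div_eq_of_lt hrK]; omega
    rcases Nat.lt_or_ge (r + 1) K with h | h
    · have e1 : (K*q+r+1) % K = r + 1 := by
        rw [Nat.add_assoc, Nat.mul_add_mod, Nat.mod_eq_of_lt h]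
      have e2 : (K*q+r+1) / K = q := by
        rw [Nat.add_assoc, Nat.mul_add_div hK, Nat.div_eq_of_lt h]; omega
      rw [eq1, ed1, e1, e2, Function.iterate_succ_apply']
      simpa using hε
    · have hrk : r + 1 = K := by omega
      have e0 : K*q+r+1 = K*(q+1) := by
        have : K*(q+1) = K*q + K := by ring
        omega
      have e1 : (K*q+r+1) % K = 0 := by rw [e0, Nat.mul_mod_right]
      have e2 : (K*q+r+1) / K = q + 1 := by rw [e0, Nat.mul_div_cancel_left _ hK]
      have hqn : q < n := by
        have hc : n * K = K * n := Nat.mul_comm n K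
        have h' : K * q < K * n := by omega
        exact Nat.lt_of_mul_lt_mul_left h'
      rw [eq1, ed1, e1, e2]
      have hit : f^[r+1] (c q) = f (f^[r] (c q)) := Function.iterate_succ_apply' f r (c q)
      rw [← hit, hrk]
      simpa using hstep q hqn

theorem stmt16 [CompactSpace X] (f : X → X) (hf : Continuous f) (k : ℕ)
    (U : Fin (k+1) → Set X) (hne : ∀ i, (U i).Nonempty) (hop : ∀ i, IsOpen (U i))
    (hdisj : ∀ i j, i ≠ j → closure (U i) ∩ closure (U j) = ∅)
    (hfU : ∀ i, f '' closure (U i) ⊆ U (i + 1)) :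
    ∀ i, MapsTo (f^[k+1]) (closure (U i)) (U i) ∧
      (ChainRecIn (f^[k+1]) (closure (U i))).Nonempty ∧
      ChainRecIn (f^[k+1]) (closure (U i)) ⊆ ChainRec f ∧
      (ChainRec f ∩ closure (U i)).Nonempty := by
  open Fin.NatCast Fin.CommRing in
  have key : ∀ (m : ℕ) (i : Fin (k+1)) (x : X), x ∈ closure (U i) →
      f^[m+1] x ∈ U (i + ((m+1 : ℕ) : Fin (k+1))) := by
    intro m
    induction m with
    | zero =>
      intro i x hx
      simpa using hfU i ⟨x, hx, rfl⟩
    | succ m ih =>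
      intro i x hx
      have h1 : f^[m+1] x ∈ U (i + ((m+1 : ℕ) : Fin (k+1))) := ih i x hx
      have h2 : f^[m+1] x ∈ closure (U (i + ((m+1 : ℕ) : Fin (k+1)))) :=
        subset_closure h1
      have h3 := hfU (i + ((m+1 : ℕ) : Fin (k+1))) ⟨_, h2, rfl⟩
      rw [Function.iterate_succ_apply']
      convert h3 using 2
      push_cast
      ring
  intro i
  have hmap : MapsTo (f^[k+1]) (closure (U i)) (U i) := by
    intro x hx
    have := key k i x hx
    simpa [Fin.natCast_self] using this
  have hmap' : MapsTo (f^[k+1]) (closure (U i)) (closure (U i)) :=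
    fun x hx => subset_closure (hmap hx)
  have hne' : (closure (U i)).Nonempty := (hne i).mono subset_closure
  have h2 : (ChainRecIn (f^[k+1]) (closure (U i))).Nonempty :=
    chainRecIn_nonempty (f^[k+1]) (hf.iterate (k+1)) _ isClosed_closure hne' hmap'
  have h3 : ChainRecIn (f^[k+1]) (closure (U i)) ⊆ ChainRec f :=
    chainRecIn_subset_chainRec f (k+1) (Nat.succ_pos k) _
  refine ⟨hmap, h2, h3, ?_⟩
  obtain ⟨x, hx⟩ := h2
  exact ⟨x, h3 hx, hx.1⟩
end
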